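/- arXiv:2503.19069 — 4 statements merged into one kernel-verified Lean document; each statement's English description precedes it below -/
import Mathlib

section
/- Let G = (V, E) be a connected finite simple graph with |V| ≥ 2. Then the number of spanning trees of G is at most e · (2|E|/|V|)^{|V|−2}, and consequently at most e · (2μ(G))^{|V|−2}, where μ(G) is the maximum subgraph density of G. -/
set_option linter.unusedSectionVars false
set_option maxHeartbeats 2000000

open Finset Equiv Matrix

variable {V K R : Type*} [Fintype V] [DecidableEq V] [Fintype K] [DecidableEq K] [CommRing R]

theorem cb_aux (A : Matrix V K R) (B : Matrix K V R) {p : V → K}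
    (H : ¬Function.Injective p) :
    (∑ σ : Perm V, ((Equiv.Perm.sign σ : ℤ) : R) * ∏ x, A (σ x) (p x) * B (p x) x) = 0 := by
  obtain ⟨i, j, hpij, hij⟩ : ∃ i j, p i = p j ∧ i ≠ j := by
    rw [Function.Injective] at H
    push_neg at H
    obtain ⟨i, j, h1, h2⟩ := H
    exact ⟨i, j, h1, h2⟩
  exact
    Finset.sum_involution (fun σ _ => σ * Equiv.swap i j)
      (fun σ _ => by
        have : (∏ x, A (σ x) (p x)) = ∏ x, A ((σ * Equiv.swap i j) x) (p x) :=
          Fintype.prod_equiv (Equiv.swap i j) _ _ (by simp [Equiv.apply_swap_eq_self hpij])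
        simp [this, Equiv.Perm.sign_swap hij, prod_mul_distrib])
      (fun σ _ _ => (not_congr Equiv.mul_swap_eq_iff).mpr hij) (fun _ _ => mem_univ _)
      fun σ _ => Equiv.mul_swap_involutive i j σ

theorem perm_sum (M N : Matrix V V R) :
    (∑ τ : Perm V, ∑ σ : Perm V, ((Perm.sign σ : ℤ) : R) * ∏ x, M (σ x) (τ x) * N (τ x) x)
      = det M * det N :=
  calc
    (∑ τ : Perm V, ∑ σ : Perm V, ((Perm.sign σ : ℤ) : R) * ∏ x, M (σ x) (τ x) * N (τ x) x)
     = ∑ σ : Perm V, ∑ τ : Perm V,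
        (∏ i, N (σ i) i) * ((Perm.sign τ : ℤ) : R) * ∏ j, M (τ j) (σ j) := by
      simp only [mul_comm, mul_left_comm, prod_mul_distrib, mul_assoc]
    _ = ∑ σ : Perm V, ∑ τ : Perm V,
        (∏ i, N (σ i) i) * (((Perm.sign σ : ℤ) : R) * ((Perm.sign τ : ℤ) : R)) *
          ∏ i, M (τ i) i :=
      (sum_congr rfl fun σ _ =>
        Fintype.sum_equiv (Equiv.mulRight σ⁻¹) _ _ fun τ => by
          have h1 : (∏ j, M (τ j) (σ j)) = ∏ j, M ((τ * σ⁻¹) j) j := by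
            rw [← (σ⁻¹ : _ ≃ _).prod_comp]
            simp only [Equiv.Perm.coe_mul, Equiv.Perm.coe_inv, Equiv.apply_symm_apply, Function.comp_apply]
          have h : ((Perm.sign σ : ℤ) : R) * ((Perm.sign (τ * σ⁻¹) : ℤ) : R)
              = ((Perm.sign τ : ℤ) : R) :=
            calc
              ((Perm.sign σ : ℤ) : R) * ((Perm.sign (τ * σ⁻¹) : ℤ) : R)
                  = ((Perm.sign (τ * σ⁻¹ * σ) : ℤ) : R) := by
                rw [mul_comm, Equiv.Perm.sign_mul (τ * σ⁻¹)]
                simp only [Int.cast_mul, Units.val_mul]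
              _ = ((Perm.sign τ : ℤ) : R) := by simp only [inv_mul_cancel_right]
          simp_rw [Equiv.coe_mulRight, h]
          simp only [h1])
    _ = det M * det N := by
      simp only [det_apply', Finset.mul_sum, mul_comm, mul_left_comm, mul_assoc]

theorem cauchy_binet (A : Matrix V K R) (B : Matrix K V R) :
    (Fintype.card V).factorial • det (A * B)
      = ∑ f : V ↪ K, det (A.submatrix id f) * det (B.submatrix f id) := by
  have step1 : det (A * B) = ∑ f : V ↪ K,
      ∑ σ : Perm V, ((Perm.sign σ : ℤ) : R) * ∏ x, A (σ x) (f x) * B (f x) x := by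
    calc
      det (A * B) = ∑ p : V → K, ∑ σ : Perm V,
          ((Perm.sign σ : ℤ) : R) * ∏ i, A (σ i) (p i) * B (p i) i := by
        simp only [det_apply', mul_apply, prod_univ_sum, mul_sum, Fintype.piFinset_univ]
        rw [Finset.sum_comm]
      _ = ∑ p ∈ ({p : V → K | Function.Injective p} : Finset _), ∑ σ : Perm V,
          ((Perm.sign σ : ℤ) : R) * ∏ i, A (σ i) (p i) * B (p i) i := by
        refine (sum_subset (filter_subset _ _) fun p _ hp => cb_aux A B ?_).symm
        simpa using hp
      _ = ∑ p : {p : V → K // Function.Injective p}, ∑ σ : Perm V,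
          ((Perm.sign σ : ℤ) : R) * ∏ i, A (σ i) (p.1 i) * B (p.1 i) i :=
        Finset.sum_subtype _ (by intro x; simp) _
      _ = ∑ f : V ↪ K,
          ∑ σ : Perm V, ((Perm.sign σ : ℤ) : R) * ∏ x, A (σ x) (f x) * B (f x) x := by
        exact Fintype.sum_equiv (Equiv.subtypeInjectiveEquivEmbedding V K) _ _ fun p => rfl
  calc
    (Fintype.card V).factorial • det (A * B)
        = ∑ _τ : Perm V, det (A * B) := by
      rw [Finset.sum_const, Finset.card_univ, Fintype.card_perm]
    _ = ∑ τ : Perm V, ∑ f : V ↪ K,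
        ∑ σ : Perm V, ((Perm.sign σ : ℤ) : R) *
          ∏ x, A (σ x) ((τ.toEmbedding.trans f) x) * B ((τ.toEmbedding.trans f) x) x := by
      refine Finset.sum_congr rfl fun τ _ => ?_
      rw [step1]
      refine Fintype.sum_equiv
        ⟨fun f => τ.symm.toEmbedding.trans f, fun f => τ.toEmbedding.trans f,
          fun f => by ext x; simp, fun f => by ext x; simp⟩ _ _ fun f => ?_
      refine Finset.sum_congr rfl fun σ _ => ?_
      congr 1
      refine Finset.prod_congr rfl fun x _ => ?_
      simp
    _ = ∑ f : V ↪ K, ∑ τ : Perm V,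
        ∑ σ : Perm V, ((Perm.sign σ : ℤ) : R) *
          ∏ x, A (σ x) ((τ.toEmbedding.trans f) x) * B ((τ.toEmbedding.trans f) x) x := by
      rw [Finset.sum_comm]
    _ = ∑ f : V ↪ K, det (A.submatrix id f) * det (B.submatrix f id) :=
      Finset.sum_congr rfl fun f _ => perm_sum (A.submatrix id f) (B.submatrix f id)

theorem my_trace_eq_sum_eigenvalues {W : Type*} [Fintype W] [DecidableEq W]
    {M : Matrix W W ℝ} (hM : M.IsHermitian) : M.trace = ∑ i, hM.eigenvalues i := by
  simpa using hM.trace_eq_sum_eigenvalues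

theorem my_amgm {W : Type*} [Fintype W] (z : W → ℝ) (hz : ∀ i, 0 ≤ z i)
    (hk : 0 < Fintype.card W) :
    ∏ i, z i ≤ ((∑ i, z i) / (Fintype.card W : ℝ)) ^ (Fintype.card W) := by
  set k := Fintype.card W with hkdef
  have hw : ∑ _i : W, ((k : ℝ))⁻¹ = 1 := by
    rw [Finset.sum_const, Finset.card_univ, ← hkdef, nsmul_eq_mul]
    field_simp
  have h := Real.geom_mean_le_arith_mean_weighted Finset.univ (fun _ => ((k : ℝ))⁻¹) z
    (fun i _ => by positivity) hw (fun i _ => hz i)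
  have hprod : (∏ i, z i ^ ((k : ℝ))⁻¹) = (∏ i, z i) ^ ((k : ℝ))⁻¹ := by
    rw [← Real.finset_prod_rpow Finset.univ z (fun i _ => hz i)]
  rw [hprod] at h
  have hP : (0:ℝ) ≤ ∏ i, z i := Finset.prod_nonneg fun i _ => hz i
  have h2 : ((∏ i, z i) ^ ((k : ℝ))⁻¹) ^ (k : ℕ) ≤ ((∑ i, z i) / (k:ℝ)) ^ (k:ℕ) := by
    apply pow_le_pow_left₀ (Real.rpow_nonneg hP _)
    calc (∏ i, z i) ^ ((k : ℝ))⁻¹ ≤ ∑ i, ((k:ℝ))⁻¹ * z i := h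
      _ = (∑ i, z i) / (k:ℝ) := by rw [← Finset.mul_sum]; ring
  rwa [← Real.rpow_natCast ((∏ i, z i) ^ ((k : ℝ))⁻¹) k, ← Real.rpow_mul hP,
    inv_mul_cancel₀ (by exact_mod_cast hk.ne' : (k:ℝ) ≠ 0), Real.rpow_one] at h2

theorem my_det_le_pow_trace {W : Type*} [Fintype W] [DecidableEq W]
    {M : Matrix W W ℝ} (hM : M.PosSemidef) (hk : 0 < Fintype.card W) :
    M.det ≤ (M.trace / (Fintype.card W : ℝ)) ^ (Fintype.card W) := by
  rw [hM.isHermitian.det_eq_prod_eigenvalues, my_trace_eq_sum_eigenvalues hM.isHermitian]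
  exact_mod_cast my_amgm _ (fun i => hM.eigenvalues_nonneg i) hk

theorem det_updateRow_finset_sum {W ι R : Type*} [Fintype W] [DecidableEq W] [DecidableEq ι] [CommRing R]
    (M : Matrix W W R) (i₀ : W) (s : Finset ι) (v : ι → W → R) :
    (M.updateRow i₀ (∑ i ∈ s, v i)).det = ∑ i ∈ s, (M.updateRow i₀ (v i)).det := by
  induction s using Finset.induction_on with
  | empty =>
    simp only [Finset.sum_empty]
    exact Matrix.det_eq_zero_of_row_eq_zero i₀ (fun j => by simp)
  | @insert a t ha ih =>
    rw [Finset.sum_insert ha, Matrix.det_updateRow_add, ih, Finset.sum_insert ha]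

open SimpleGraph in
theorem main_bound {n : ℕ} (G : SimpleGraph (Fin n)) (hconn : G.Connected) (hn : 2 ≤ n) :
    ((({T | T ⊆ G.edgeSet ∧ T.ncard = n - 1 ∧ (SimpleGraph.fromEdgeSet T).Connected} :
      Set (Set (Sym2 (Fin n)))).ncard : ℝ))
      ≤ Real.exp 1 * (2 * (G.edgeSet.ncard : ℝ) / (n : ℝ)) ^ (n - 2) := by
  classical
  set ST : Set (Set (Sym2 (Fin n))) :=
    {T | T ⊆ G.edgeSet ∧ T.ncard = n - 1 ∧ (SimpleGraph.fromEdgeSet T).Connected} with hSTdef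
  set m : ℕ := G.edgeSet.ncard with hmdef
  have hnn : 0 < n := by omega
  have hn0 : (0:ℝ) < n := by exact_mod_cast hnn
  rcases Set.eq_empty_or_nonempty ST with hSTe | ⟨T₀, hT₀⟩
  · rw [hSTe]
    simp only [Set.ncard_empty, Nat.cast_zero]
    positivity
  -- basic edge counts
  have hedge : ∃ e, e ∈ G.edgeSet := by
    have h01 : (⟨0, by omega⟩ : Fin n) ≠ ⟨1, by omega⟩ := by simp [Fin.ext_iff]
    obtain ⟨w⟩ := hconn.preconnected ⟨0, by omega⟩ ⟨1, by omega⟩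
    cases w with
    | cons h p => exact ⟨_, (SimpleGraph.mem_edgeSet G).mpr h⟩
  have hm1 : 1 ≤ m := by
    rw [hmdef]
    have := (Set.ncard_pos (Set.toFinite _)).mpr hedge
    omega
  have hKcard : Fintype.card ↥G.edgeSet = m := by
    rw [hmdef, ← Nat.card_coe_set_eq, Nat.card_eq_fintype_card]
  have hm2 : 2 * m ≤ n * n := by
    have hdeg := G.sum_degrees_eq_twice_card_edges
    have hbound : ∑ v, G.degree v ≤ n * n := by
      calc ∑ v : Fin n, G.degree v ≤ ∑ _v : Fin n, n :=
            Finset.sum_le_sum (fun v _ => le_of_lt (by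
              simpa [Fintype.card_fin] using G.degree_lt_card_verts v))
        _ = n * n := by simp [Finset.sum_const, Finset.card_univ, mul_comm]
    rw [hdeg] at hbound
    have hef : #G.edgeFinset = m := by rw [SimpleGraph.edgeFinset_card, hKcard]
    omega
  have hm0 : (0:ℝ) < (m:ℝ) := by exact_mod_cast hm1
  have hn1 : (0:ℝ) < (n:ℝ) - 1 := by
    have : (2:ℝ) ≤ n := by exact_mod_cast hn
    linarith
  -- edge endpoints
  set fst : ↥G.edgeSet → Fin n := fun e => (e : Sym2 (Fin n)).out.1 with hfst
  set snd : ↥G.edgeSet → Fin n := fun e => (e : Sym2 (Fin n)).out.2 with hsnd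
  have hmk : ∀ e : ↥G.edgeSet, s(fst e, snd e) = (e : Sym2 (Fin n)) := by
    intro e
    rw [hfst, hsnd]
    show Sym2.mk (e : Sym2 (Fin n)).out.1 (e : Sym2 (Fin n)).out.2 = _
    rw [Sym2.mk, Quot.out_eq]
  have hdiag : ∀ e : ↥G.edgeSet, fst e ≠ snd e := by
    intro e heq
    apply G.not_isDiag_of_mem_edgeSet e.2
    rw [← hmk e, Sym2.mk_isDiag_iff]
    exact heq
  set N : Matrix (Fin n) ↥G.edgeSet ℝ :=
    Matrix.of (fun v e => (if v = fst e then (1:ℝ) else 0) - (if v = snd e then 1 else 0))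
    with hN
  have colsum : ∀ e, ∑ v, N v e = 0 := by
    intro e
    simp [hN, Finset.sum_sub_distrib]
  have dotN : ∀ (w : Fin n → ℝ) (e : ↥G.edgeSet), ∑ v, w v * N v e = w (fst e) - w (snd e) := by
    intro w e
    simp [hN, mul_sub, mul_ite, mul_one, mul_zero, Finset.sum_sub_distrib]
  have colsq : ∀ e, ∑ v, N v e * N v e = 2 := by
    intro e
    have key : ∀ v, N v e * N v e
        = (if v = fst e then (1:ℝ) else 0) + (if v = snd e then 1 else 0) := by
      intro v
      by_cases h1 : v = fst e <;> by_cases h2 : v = snd e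
      · exact absurd (h1.symm.trans h2) (hdiag e)
      all_goals simp [hN, h1, h2, hdiag e, (hdiag e).symm]
    rw [Finset.sum_congr rfl (fun v _ => key v)]
    rw [Finset.sum_add_distrib]
    simp
    norm_num
  -- the augmented incidence matrix
  have hc0 : (0:ℝ) < 2*(m:ℝ)/((n:ℝ)-1) := by positivity
  set c : ℝ := 2*(m:ℝ)/((n:ℝ)-1) with hc
  set γ : ℝ := Real.sqrt (c/n) with hγ
  have hγ2 : γ * γ = c/n := Real.mul_self_sqrt (le_of_lt (div_pos hc0 hn0))
  set A : Matrix (Fin n) (↥G.edgeSet ⊕ Unit) ℝ :=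
    Matrix.of (fun v w => Sum.elim (fun e => N v e) (fun _ => γ) w) with hA
  set M : Matrix (Fin n) (Fin n) ℝ := A * Aᵀ with hM
  have hAt : Aᵀ = Aᴴ := by
    ext i j
    simp [Matrix.conjTranspose_apply]
  have h_psd : M.PosSemidef := by
    rw [hM, hAt]
    exact Matrix.posSemidef_self_mul_conjTranspose A
  have h_trace : M.trace = 2*(m:ℝ) + c := by
    have htr : M.trace = ∑ v, ∑ w, A v w * A v w := by
      simp [hM, Matrix.trace, Matrix.diag, Matrix.mul_apply]
    rw [htr, Finset.sum_comm, Fintype.sum_sum_type]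
    have h1 : ∑ e : ↥G.edgeSet, ∑ v, A v (Sum.inl e) * A v (Sum.inl e) = 2*(m:ℝ) := by
      have : ∀ e : ↥G.edgeSet, ∑ v, A v (Sum.inl e) * A v (Sum.inl e) = 2 := by
        intro e
        simpa [hA] using colsq e
      rw [Finset.sum_congr rfl (fun e _ => this e)]
      rw [Finset.sum_const, Finset.card_univ, hKcard, nsmul_eq_mul]
      ring
    have h2 : ∑ _u : Unit, ∑ v : Fin n, A v (Sum.inr _u) * A v (Sum.inr _u) = c := by
      simp only [hA, Matrix.of_apply, Sum.elim_inr]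
      rw [Fintype.sum_unique]
      rw [Finset.sum_const, Finset.card_univ, Fintype.card_fin, nsmul_eq_mul, hγ2]
      field_simp
    rw [h1, h2]
  have h_det_ub : M.det ≤ ((2*(m:ℝ) + c)/n)^n := by
    have hcard : (0:ℕ) < Fintype.card (Fin n) := by simp [Fintype.card_fin]; omega
    have := my_det_le_pow_trace h_psd hcard
    rwa [h_trace, Fintype.card_fin] at this
  -- construction of the embedding associated with a spanning tree
  have build : ∀ T ∈ ST, ∃ f : Fin n ↪ ↥G.edgeSet ⊕ Unit,
      (∃ j0, f j0 = Sum.inr ()) ∧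
      (∀ j, f j = Sum.inr () ∨ ∃ k : ↥G.edgeSet, (k : Sym2 (Fin n)) ∈ T ∧ f j = Sum.inl k) ∧
      (∀ k : ↥G.edgeSet, (k : Sym2 (Fin n)) ∈ T → ∃ j, f j = Sum.inl k) := by
    rintro T ⟨hTsub, hTcard, -⟩
    have hTfin : T.Finite := Set.toFinite T
    have hTFmem : ∀ e, e ∈ hTfin.toFinset ↔ e ∈ T := fun e => hTfin.mem_toFinset
    have hTFcard : hTfin.toFinset.card = n - 1 := by
      rw [← Set.ncard_eq_toFinset_card]
      exact hTcard
    obtain ⟨ET, hETmem, hETcard⟩ : ∃ ET : Finset ↥G.edgeSet,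
        (∀ k : ↥G.edgeSet, k ∈ ET ↔ (k : Sym2 (Fin n)) ∈ T) ∧ ET.card = n - 1 := by
      refine ⟨hTfin.toFinset.attach.map
        ⟨fun x => ⟨x.1, hTsub ((hTFmem x.1).mp x.2)⟩, ?_⟩, ?_, ?_⟩
      · intro a b h
        apply Subtype.ext
        exact (congrArg Subtype.val h :)
      · intro k
        rw [Finset.mem_map]
        constructor
        · rintro ⟨x, -, hx⟩
          rw [← hx]
          exact (hTFmem x.1).mp x.2
        · intro hk
          exact ⟨⟨k.1, (hTFmem k.1).mpr hk⟩, Finset.mem_attach _ _, Subtype.ext rfl⟩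
      · rw [Finset.card_map, Finset.card_attach, hTFcard]
    obtain ⟨W, hWmem, hWcard⟩ : ∃ W : Finset (↥G.edgeSet ⊕ Unit),
        (∀ x, x ∈ W ↔ (x = Sum.inr () ∨ ∃ k, k ∈ ET ∧ x = Sum.inl k)) ∧ W.card = n := by
      refine ⟨ET.map ⟨Sum.inl, Sum.inl_injective⟩ ∪ {Sum.inr ()}, ?_, ?_⟩
      · intro x
        rw [Finset.mem_union, Finset.mem_map, Finset.mem_singleton]
        constructor
        · rintro (⟨k, hk, rfl⟩ | h)
          · exact Or.inr ⟨k, hk, rfl⟩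
          · exact Or.inl h
        · rintro (h | ⟨k, hk, rfl⟩)
          · exact Or.inr h
          · exact Or.inl ⟨k, hk, rfl⟩
      · rw [Finset.card_union_of_disjoint (by simp), Finset.card_map, hETcard,
          Finset.card_singleton]
        omega
    obtain ⟨eqv⟩ : Nonempty (Fin n ≃ {x // x ∈ W}) :=
      ⟨(finCongr hWcard.symm).trans W.equivFin.symm⟩
    refine ⟨eqv.toEmbedding.trans (Function.Embedding.subtype _), ?_, ?_, ?_⟩
    · exact ⟨eqv.symm ⟨Sum.inr (), (hWmem _).mpr (Or.inl rfl)⟩, by simp⟩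
    · intro j
      rcases (hWmem _).mp (eqv j).2 with hj | ⟨k, hk, hj⟩
      · exact Or.inl hj
      · exact Or.inr ⟨k, (hETmem k).mp hk, hj⟩
    · intro k hk
      exact ⟨eqv.symm ⟨Sum.inl k, (hWmem _).mpr (Or.inr ⟨k, (hETmem k).mpr hk, rfl⟩)⟩, by simp⟩
  -- the key determinant bound for spanning trees
  have tree_det : ∀ T ∈ ST, ∀ f : Fin n ↪ ↥G.edgeSet ⊕ Unit,
      (∀ j, f j = Sum.inr () ∨ ∃ k : ↥G.edgeSet, (k : Sym2 (Fin n)) ∈ T ∧ f j = Sum.inl k) →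
      (∀ k : ↥G.edgeSet, (k : Sym2 (Fin n)) ∈ T → ∃ j, f j = Sum.inl k) →
      (∃ j0, f j0 = Sum.inr ()) →
      c * n ≤ (Matrix.det (A.submatrix id f))^2 := by
    rintro T hT f hmemf hsurjf ⟨j0, hj0⟩
    obtain ⟨hTsub, hTcard, hTconn⟩ := hT
    set i₀ : Fin n := ⟨0, hnn⟩ with hi₀
    set D : Matrix (Fin n) (Fin n) ℝ := A.submatrix id f with hD
    set D₁ : Matrix (Fin n) (Fin n) ℝ := D.updateCol j0 (fun _ => (1:ℝ)) with hD₁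
    -- the j0 column of D is constant γ
    have hDj0 : ∀ i, D i j0 = γ := by
      intro i
      rw [hD]
      show A i (f j0) = γ
      rw [hj0, hA]
      rfl
    -- other columns of D₁ are incidence columns of tree edges
    have hcolD : ∀ j, j ≠ j0 → ∃ k : ↥G.edgeSet, (k : Sym2 (Fin n)) ∈ T ∧
        (∀ i, D₁ i j = N i k) := by
      intro j hj
      rcases hmemf j with hfj | ⟨k, hkT, hfj⟩
      · exact absurd (f.injective (hfj.trans hj0.symm)) hj
      · refine ⟨k, hkT, fun i => ?_⟩
        rw [hD₁, Matrix.updateCol_ne hj, hD]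
        show A i (f j) = N i k
        rw [hfj, hA]
        rfl
    have hD₁j0 : ∀ i, D₁ i j0 = 1 := by
      intro i
      rw [hD₁, Matrix.updateCol_self]
    -- det D = γ * det D₁
    have hdetD : D.det = γ * D₁.det := by
      have hscale : D = D₁.updateCol j0 (γ • (fun _ => (1:ℝ))) := by
        ext i j
        by_cases h : j = j0
        · subst h
          rw [Matrix.updateCol_self]
          simp [hDj0 i]
        · rw [Matrix.updateCol_ne h, hD₁, Matrix.updateCol_ne h]
      have hidem : D₁.updateCol j0 (fun _ => (1:ℝ)) = D₁ := by
        ext i j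
        by_cases h : j = j0
        · subst h
          rw [Matrix.updateCol_self, hD₁, Matrix.updateCol_self]
        · rw [Matrix.updateCol_ne h]
      rw [hscale, Matrix.det_updateCol_smul, hidem]
    -- row operation: replace row i₀ by the sum of all rows
    have hcolsum1 : ∀ j, j ≠ j0 → ∑ i, D₁ i j = 0 := by
      intro j hj
      obtain ⟨k, -, hk⟩ := hcolD j hj
      rw [Finset.sum_congr rfl (fun i _ => hk i)]
      exact colsum k
    have hcolsum0 : ∑ i, D₁ i j0 = n := by
      rw [Finset.sum_congr rfl (fun i _ => hD₁j0 i)]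
      simp
    set B₂ : Matrix (Fin n) (Fin n) ℝ :=
      D₁.updateRow i₀ (fun j => if j = j0 then (1:ℝ) else 0) with hB₂
    have hdetD₁ : D₁.det = (n:ℝ) * B₂.det := by
      have hrowop : D₁.det = (D₁.updateRow i₀ (fun j => ∑ i, D₁ i j)).det := by
        have hsplit : (fun j => ∑ i, D₁ i j)
            = D₁ i₀ + ∑ i ∈ Finset.univ.erase i₀, D₁ i := by
          funext j
          rw [Pi.add_apply, Finset.sum_apply (g := D₁)]
          exact (Finset.add_sum_erase _ (fun i => D₁ i j) (Finset.mem_univ i₀)).symm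
        rw [hsplit, Matrix.det_updateRow_add, Matrix.updateRow_eq_self,
          det_updateRow_finset_sum (v := D₁), Finset.sum_eq_zero, add_zero]
        intro i hi
        have hne : i₀ ≠ i := (Finset.ne_of_mem_erase hi).symm
        apply Matrix.det_zero_of_row_eq hne
        rw [Matrix.updateRow_self, Matrix.updateRow_ne (Finset.ne_of_mem_erase hi)]
      have hrow2 : (fun j => ∑ i, D₁ i j)
          = (n:ℝ) • (fun j => if j = j0 then (1:ℝ) else 0) := by
        funext j
        by_cases h : j = j0
        · subst h
          simp [hcolsum0]
        · simp [h, hcolsum1 j h]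
      rw [hrowop, hrow2, Matrix.det_updateRow_smul, ← hB₂]
    -- B₂ has integer entries
    have hentries : ∀ i j, ∃ z : ℤ, B₂ i j = (z:ℝ) := by
      intro i j
      by_cases hi : i = i₀
      · subst hi
        rw [hB₂, Matrix.updateRow_self]
        by_cases hj : j = j0
        · exact ⟨1, by simp [hj]⟩
        · exact ⟨0, by simp [hj]⟩
      · rw [hB₂, Matrix.updateRow_ne hi]
        by_cases hj : j = j0
        · exact ⟨1, by rw [hj, hD₁j0 i]; simp⟩
        · obtain ⟨k, -, hk⟩ := hcolD j hj
          rw [hk i, hN]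
          by_cases h1 : i = fst k <;> by_cases h2 : i = snd k
          · exact absurd (h1.symm.trans h2) (hdiag k)
          · exact ⟨1, by simp [Matrix.of_apply, h1, h2, hdiag k]⟩
          · exact ⟨-1, by simp [Matrix.of_apply, h1, h2, (hdiag k).symm]⟩
          · exact ⟨0, by simp [Matrix.of_apply, h1, h2]⟩
    have hint : ∃ z : ℤ, B₂.det = (z:ℝ) := by
      have hmem : B₂.det ∈ (Int.castRingHom ℝ).range := by
        rw [Matrix.det_apply']
        apply Subring.sum_mem
        intro σ _
        apply Subring.mul_mem
        · exact ⟨((Equiv.Perm.sign σ : ℤ)), rfl⟩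
        · apply Subring.prod_mem
          intro i _
          obtain ⟨z, hz⟩ := hentries (σ i) i
          exact ⟨z, hz.symm⟩
      obtain ⟨z, hz⟩ := RingHom.mem_range.mp hmem
      exact ⟨z, hz.symm⟩
    -- B₂ is invertible, via the tree structure
    have hdetB₂ : B₂.det ≠ 0 := by
      intro h0
      obtain ⟨v, hv0, hv⟩ := Matrix.exists_vecMul_eq_zero_iff.mpr h0
      set w : Fin n → ℝ := Function.update v i₀ 0 with hw
      have heq : ∀ j, ∑ i, v i * B₂ i j = 0 := by
        intro j
        have := congrFun hv j
        rwa [Matrix.vecMul, dotProduct] at this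
      have hws : ∀ g : Fin n → ℝ, ∑ i, w i * g i = ∑ i ∈ Finset.univ.erase i₀, v i * g i := by
        intro g
        rw [← Finset.add_sum_erase _ (fun i => w i * g i) (Finset.mem_univ i₀)]
        rw [hw, Function.update_self, zero_mul, zero_add]
        exact Finset.sum_congr rfl fun i hi => by
          rw [Function.update_of_ne (Finset.ne_of_mem_erase hi)]
      -- tree edge equations
      have hedgeeq : ∀ k : ↥G.edgeSet, (k : Sym2 (Fin n)) ∈ T → w (fst k) = w (snd k) := by
        intro k hk
        obtain ⟨j, hj⟩ := hsurjf k hk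
        have hjne : j ≠ j0 := by
          intro hjj
          rw [hjj, hj0] at hj
          exact absurd hj (by simp)
        have hDcol : ∀ i, D₁ i j = N i k := by
          intro i
          rw [hD₁, Matrix.updateCol_ne hjne, hD]
          show A i (f j) = N i k
          rw [hj, hA]
          rfl
        have hstep : ∑ i, v i * B₂ i j = ∑ i, w i * N i k := by
          rw [← Finset.add_sum_erase _ (fun i => v i * B₂ i j) (Finset.mem_univ i₀)]
          have hB₂i₀ : B₂ i₀ j = 0 := by
            rw [hB₂, Matrix.updateRow_self, if_neg hjne]
          rw [hB₂i₀, mul_zero, zero_add, hws]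
          refine Finset.sum_congr rfl fun i hi => ?_
          rw [hB₂, Matrix.updateRow_ne (Finset.ne_of_mem_erase hi), hDcol i]
        have h0 : ∑ i, w i * N i k = 0 := by rw [← hstep]; exact heq j
        rw [dotN w k] at h0
        linarith
      -- connectivity forces w constant
      have hwconst : ∀ a b : Fin n, (SimpleGraph.fromEdgeSet T).Adj a b → w a = w b := by
        intro a b hab
        rw [SimpleGraph.fromEdgeSet_adj] at hab
        obtain ⟨hmemT, hne⟩ := hab
        have hGedge : s(a,b) ∈ G.edgeSet := hTsub hmemT
        obtain ⟨k, hkmem, hkval⟩ : ∃ k : ↥G.edgeSet, (k : Sym2 (Fin n)) ∈ T ∧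
            (k : Sym2 (Fin n)) = s(a,b) := ⟨⟨s(a,b), hGedge⟩, hmemT, rfl⟩
        have heqk := hedgeeq k hkmem
        have hkeq : s(fst k, snd k) = s(a,b) := (hmk k).trans hkval
        rcases Sym2.eq_iff.mp hkeq with ⟨h1, h2⟩ | ⟨h1, h2⟩
        · rw [← h1, ← h2]; exact heqk
        · rw [← h1, ← h2]; exact heqk.symm
      have hreach : ∀ a b : Fin n, w a = w b := by
        intro a b
        obtain ⟨p⟩ := hTconn.preconnected a b
        induction p with
        | nil => rfl
        | cons h p ih => exact (hwconst _ _ h).trans ih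
      have hwzero : ∀ i, w i = 0 := fun i =>
        (hreach i i₀).trans (by rw [hw, Function.update_self])
      apply hv0
      funext i
      show v i = 0
      by_cases hi : i = i₀
      · subst hi
        have h0 := heq j0
        have hcol : ∀ i : Fin n, B₂ i j0 = 1 := by
          intro i
          by_cases h : i = i₀
          · rw [h, hB₂, Matrix.updateRow_self, if_pos rfl]
          · rw [hB₂, Matrix.updateRow_ne h, hD₁j0]
        rw [← Finset.add_sum_erase _ (fun i => v i * B₂ i j0) (Finset.mem_univ i₀)] at h0
        have herase : ∑ i ∈ Finset.univ.erase i₀, v i * B₂ i j0 = 0 := by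
          rw [← hws fun i => B₂ i j0]
          exact Finset.sum_eq_zero fun i _ => by rw [hwzero i, zero_mul]
        rw [herase, add_zero, hcol i₀, mul_one] at h0
        exact h0
      · have := hwzero i
        rwa [hw, Function.update_of_ne hi] at this
    -- conclude: det B₂ is a nonzero integer, so (det B₂)^2 ≥ 1
    obtain ⟨z, hz⟩ := hint
    have hz0 : z ≠ 0 := by
      intro h
      rw [h] at hz
      simp only [Int.cast_zero] at hz
      exact hdetB₂ hz
    have hz2 : (1:ℤ) ≤ z^2 := by
      rcases hz0.lt_or_gt with h | h <;> nlinarith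
    have hz1 : (1:ℝ) ≤ (B₂.det)^2 := by
      have : ((1:ℤ):ℝ) ≤ ((z^2:ℤ):ℝ) := by exact_mod_cast hz2
      rw [hz]
      push_cast at this ⊢
      linarith
    have hdetfull : Matrix.det (A.submatrix id f) = γ * ((n:ℝ) * B₂.det) := by
      rw [← hD, hdetD, hdetD₁]
    rw [hdetfull]
    have hcn : (0:ℝ) ≤ (c/n) * (n:ℝ)^2 := by
      apply mul_nonneg (le_of_lt (div_pos hc0 hn0))
      positivity
    calc c * n = (c/n) * (n:ℝ)^2 * 1 := by field_simp
      _ ≤ (c/n) * (n:ℝ)^2 * (B₂.det)^2 := by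
          exact mul_le_mul_of_nonneg_left hz1 hcn
      _ = (γ * ((n:ℝ) * B₂.det))^2 := by rw [← hγ2]; ring
  -- choose an embedding for each spanning tree
  choose fCh hP1 hP2 hP3 using build
  -- Cauchy-Binet for our Gram matrix
  have hCB : ((n.factorial : ℕ) : ℝ) * M.det
      = ∑ f : Fin n ↪ (↥G.edgeSet ⊕ Unit), (Matrix.det (A.submatrix id ⇑f))^2 := by
    have h := cauchy_binet A Aᵀ
    rw [Fintype.card_fin] at h
    rw [hM, ← nsmul_eq_mul, h]
    refine Finset.sum_congr rfl fun f _ => ?_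
    rw [← Matrix.transpose_submatrix, Matrix.det_transpose, sq]
  have hSTfin : ST.Finite := Set.toFinite ST
  have hFmem : ∀ T, T ∈ hSTfin.toFinset ↔ T ∈ ST := fun T => hSTfin.mem_toFinset
  have hFcard : ST.ncard = hSTfin.toFinset.card := Set.ncard_eq_toFinset_card _ _
  set P : Finset (Set (Sym2 (Fin n)) × Equiv.Perm (Fin n)) :=
    hSTfin.toFinset ×ˢ Finset.univ with hP
  set ψ : Set (Sym2 (Fin n)) × Equiv.Perm (Fin n) → (Fin n ↪ ↥G.edgeSet ⊕ Unit) :=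
    fun p => if h : p.1 ∈ ST then p.2.toEmbedding.trans (fCh p.1 h)
      else (Equiv.refl (Fin n)).toEmbedding.trans (fCh T₀ hT₀) with hψ
  -- recovering T from the embedding
  have hrec : ∀ T (h : T ∈ ST) (σ : Equiv.Perm (Fin n)) (e : Sym2 (Fin n)),
      e ∈ T ↔ ∃ k : ↥G.edgeSet, (k : Sym2 (Fin n)) = e ∧
        ∃ j, (σ.toEmbedding.trans (fCh T h)) j = Sum.inl k := by
    intro T h σ e
    constructor
    · intro he
      have heG : e ∈ G.edgeSet := h.1 he
      obtain ⟨j, hj⟩ := hP3 T h ⟨e, heG⟩ he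
      refine ⟨⟨e, heG⟩, rfl, σ.symm j, ?_⟩
      show fCh T h (σ (σ.symm j)) = _
      rw [Equiv.apply_symm_apply]
      exact hj
    · rintro ⟨k, rfl, j, hj⟩
      have hj' : fCh T h (σ j) = Sum.inl k := hj
      rcases hP2 T h (σ j) with h' | ⟨k', hk', h'⟩
      · rw [h'] at hj'
        exact absurd hj' (by simp)
      · rw [h'] at hj'
        rw [← Sum.inl.inj hj']
        exact hk'
  have hinj : ∀ p ∈ P, ∀ q ∈ P, ψ p = ψ q → p = q := by
    rintro ⟨T, σ⟩ hp ⟨T', σ'⟩ hp' heq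
    have hT : T ∈ ST := (hFmem T).mp (Finset.mem_product.mp hp).1
    have hT' : T' ∈ ST := (hFmem T').mp (Finset.mem_product.mp hp').1
    rw [hψ] at heq
    simp only at heq
    rw [dif_pos hT, dif_pos hT'] at heq
    have hTT : T = T' := by
      ext e
      rw [hrec T hT σ e, hrec T' hT' σ' e, heq]
    subst hTT
    have hσ : σ = σ' := by
      apply Equiv.ext
      intro j
      have h1 : (σ.toEmbedding.trans (fCh T hT)) j = (σ'.toEmbedding.trans (fCh T hT')) j := by
        rw [heq]
      have h2 : fCh T hT (σ j) = fCh T hT (σ' j) := h1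
      exact (fCh T hT).injective h2
    rw [hσ]
  have hperbound : ∀ p ∈ P, c * n ≤ (Matrix.det (A.submatrix id ⇑(ψ p)))^2 := by
    rintro ⟨T, σ⟩ hp
    have hT : T ∈ ST := (hFmem T).mp (Finset.mem_product.mp hp).1
    rw [hψ]
    simp only
    rw [dif_pos hT]
    have hsub : A.submatrix id ⇑(σ.toEmbedding.trans (fCh T hT))
        = (A.submatrix id ⇑(fCh T hT)).submatrix id ⇑σ := rfl
    rw [hsub, Matrix.det_permute', mul_pow]
    have hsign : (((Equiv.Perm.sign σ : ℤ)) : ℝ)^2 = 1 := by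
      rcases Int.units_eq_one_or (Equiv.Perm.sign σ) with h | h <;> rw [h] <;> norm_num
    rw [hsign, one_mul]
    exact tree_det T hT (fCh T hT) (hP2 T hT) (hP3 T hT) (hP1 T hT)
  have hcount : (ST.ncard : ℝ) * (c * n) ≤ M.det := by
    have hsum : ((hSTfin.toFinset.card * n.factorial : ℕ) : ℝ) * (c * n)
        ≤ ((n.factorial : ℕ) : ℝ) * M.det := by
      rw [hCB]
      calc ((hSTfin.toFinset.card * n.factorial : ℕ) : ℝ) * (c * n)
          = ∑ _p ∈ P, (c * n) := by
            rw [Finset.sum_const, hP, Finset.card_product, Finset.card_univ,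
              Fintype.card_perm, Fintype.card_fin, nsmul_eq_mul]
        _ ≤ ∑ p ∈ P, (Matrix.det (A.submatrix id ⇑(ψ p)))^2 :=
            Finset.sum_le_sum hperbound
        _ = ∑ f ∈ P.image ψ, (Matrix.det (A.submatrix id ⇑f))^2 := by
            rw [Finset.sum_image hinj]
        _ ≤ ∑ f : Fin n ↪ (↥G.edgeSet ⊕ Unit), (Matrix.det (A.submatrix id ⇑f))^2 :=
            Finset.sum_le_sum_of_subset_of_nonneg (Finset.subset_univ _)
              (fun f _ _ => sq_nonneg _)
    have hfac0 : (0:ℝ) < ((n.factorial : ℕ) : ℝ) := by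
      exact_mod_cast n.factorial_pos
    rw [hFcard]
    apply le_of_mul_le_mul_left _ hfac0
    calc ((n.factorial : ℕ) : ℝ) * ((hSTfin.toFinset.card : ℝ) * (c * n))
        = ((hSTfin.toFinset.card * n.factorial : ℕ) : ℝ) * (c * n) := by
          push_cast
          ring
      _ ≤ ((n.factorial : ℕ) : ℝ) * M.det := hsum
  -- final arithmetic
  have h2m : (2*(m:ℝ) + c)/n = c := by
    rw [hc]
    field_simp
    ring
  have hτn : (ST.ncard : ℝ) * n ≤ c^(n-1) := by
    have h5 : (ST.ncard : ℝ) * n * c ≤ c^(n-1) * c := by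
      calc (ST.ncard : ℝ) * n * c = (ST.ncard : ℝ) * (c * n) := by ring
        _ ≤ M.det := hcount
        _ ≤ ((2*(m:ℝ) + c)/n)^n := h_det_ub
        _ = c^n := by rw [h2m]
        _ = c^(n-1) * c := by
            rw [← pow_succ]
            congr 1
            omega
    exact le_of_mul_le_mul_right h5 hc0
  set x : ℝ := 2*(m:ℝ)/n with hx
  have hxpos : (0:ℝ) ≤ x := by positivity
  have hxn : x ≤ (n:ℝ) := by
    rw [hx, div_le_iff₀ hn0]
    have : (2*m:ℕ) ≤ ((n*n:ℕ)) := hm2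
    exact_mod_cast this
  have hexp : ((n:ℝ)/((n:ℝ)-1))^(n-1) ≤ Real.exp 1 := by
    have h1 : (n:ℝ)/((n:ℝ)-1) = 1 + 1/((n:ℝ)-1) := by field_simp; ring
    have h2 : 1 + 1/((n:ℝ)-1) ≤ Real.exp (1/((n:ℝ)-1)) := by
      have := Real.add_one_le_exp (1/((n:ℝ)-1))
      linarith
    calc ((n:ℝ)/((n:ℝ)-1))^(n-1) ≤ (Real.exp (1/((n:ℝ)-1)))^(n-1) := by
          apply pow_le_pow_left₀ (by positivity)
          rw [h1]
          exact h2
      _ = Real.exp (((n-1:ℕ):ℝ) * (1/((n:ℝ)-1))) := by rw [← Real.exp_nat_mul]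
      _ = Real.exp 1 := by
          congr 1
          have hcast : ((n-1:ℕ):ℝ) = (n:ℝ)-1 := by
            have : (1:ℕ) ≤ n := by omega
            push_cast [Nat.cast_sub this]
            ring
          rw [hcast]
          field_simp
  have hcx : c = x * ((n:ℝ)/((n:ℝ)-1)) := by
    rw [hc, hx]
    field_simp
  have h6 : c^(n-1) ≤ x^(n-1) * Real.exp 1 := by
    rw [hcx, mul_pow]
    exact mul_le_mul_of_nonneg_left hexp (pow_nonneg hxpos _)
  have h7 : (ST.ncard : ℝ) * n ≤ x^(n-2) * x * Real.exp 1 := by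
    calc (ST.ncard : ℝ) * n ≤ c^(n-1) := hτn
      _ ≤ x^(n-1) * Real.exp 1 := h6
      _ = x^(n-2) * x * Real.exp 1 := by
          rw [← pow_succ]
          congr 2
          omega
  have h8 : x^(n-2) * x * Real.exp 1 ≤ (Real.exp 1 * x^(n-2)) * n := by
    have he1 : (0:ℝ) ≤ Real.exp 1 := le_of_lt (Real.exp_pos 1)
    have hp1 : (0:ℝ) ≤ x^(n-2) := pow_nonneg hxpos _
    have hkey : (0:ℝ) ≤ (x^(n-2) * Real.exp 1) * ((n:ℝ) - x) :=
      mul_nonneg (mul_nonneg hp1 he1) (by linarith)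
    nlinarith [hkey]
  have h9 : (ST.ncard : ℝ) * n ≤ (Real.exp 1 * x^(n-2)) * n := le_trans h7 h8
  have := le_of_mul_le_mul_right h9 hn0
  exact this

open SimpleGraph

/-- Grone–Merris type bound: a connected graph `G` on `n ≥ 2` vertices has at most
`e · (2|E|/n)^(n-2)` spanning trees, and consequently at most `e · (2 μ(G))^(n-2)`,
where `μ(G)` is the maximum subgraph density of `G`. -/
theorem card_spanningTrees_le {n : ℕ} (G : SimpleGraph (Fin n)) (hconn : G.Connected)
    (hn : 2 ≤ n) :
    let ST : Set (Set (Sym2 (Fin n))) :=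
      {T | T ⊆ G.edgeSet ∧ T.ncard = n - 1 ∧ (SimpleGraph.fromEdgeSet T).Connected}
    let μ : ℝ := sSup {d : ℝ | ∃ H : G.Subgraph, H.verts.Nonempty ∧
      d = (H.edgeSet.ncard : ℝ) / (H.verts.ncard : ℝ)}
    (ST.ncard : ℝ) ≤ Real.exp 1 * (2 * (G.edgeSet.ncard : ℝ) / (n : ℝ)) ^ (n - 2) ∧
    (ST.ncard : ℝ) ≤ Real.exp 1 * (2 * μ) ^ (n - 2) := by
  intro ST μ
  have h1 := main_bound G hconn hn
  refine ⟨h1, le_trans h1 ?_⟩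
  have hnn : 0 < n := by omega
  have hn0 : (0:ℝ) < n := by exact_mod_cast hnn
  have hμ : (G.edgeSet.ncard : ℝ) / n ≤ μ := by
    apply le_csSup
    · refine ⟨(Fintype.card (Sym2 (Fin n)) : ℝ), ?_⟩
      rintro d ⟨H, hne, rfl⟩
      have hv1 : (1:ℝ) ≤ (H.verts.ncard : ℝ) := by
        have := (Set.ncard_pos (Set.toFinite _)).mpr hne
        exact_mod_cast this
      have he : (H.edgeSet.ncard : ℝ) ≤ (Fintype.card (Sym2 (Fin n)) : ℝ) := by
        have h : H.edgeSet.ncard ≤ Fintype.card (Sym2 (Fin n)) := by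
          calc H.edgeSet.ncard ≤ (Set.univ : Set (Sym2 (Fin n))).ncard :=
                Set.ncard_le_ncard (Set.subset_univ _) (Set.toFinite _)
            _ = Fintype.card _ := by rw [Set.ncard_univ, Nat.card_eq_fintype_card]
        exact_mod_cast h
      calc (H.edgeSet.ncard:ℝ)/(H.verts.ncard:ℝ) ≤ (H.edgeSet.ncard:ℝ) :=
            div_le_self (by positivity) hv1
        _ ≤ _ := he
    · refine ⟨⊤, ?_, ?_⟩
      · rw [SimpleGraph.Subgraph.verts_top]
        have : Nonempty (Fin n) := ⟨⟨0, hnn⟩⟩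
        exact Set.univ_nonempty
      · rw [SimpleGraph.Subgraph.edgeSet_top, SimpleGraph.Subgraph.verts_top,
          Set.ncard_univ, Nat.card_eq_fintype_card, Fintype.card_fin]
  have hbase : (0:ℝ) ≤ 2 * (G.edgeSet.ncard : ℝ) / n := by positivity
  have hle : 2 * (G.edgeSet.ncard : ℝ) / n ≤ 2 * μ := by
    rw [mul_div_assoc]
    linarith
  exact mul_le_mul_of_nonneg_left (pow_le_pow_left₀ hbase hle _) (Real.exp_pos 1).le
end

section
/- Let Γ be a finite simple graph with no isolated vertices, k vertices, maximum degree d, and minimum vertex cover number τ. Let Γ' be a fixed copy of Γ in the complete graph K_n with k < n, and let H be a graph with no isolated vertices, ℓ vertices and m connected components that is isomorphic to some subgraph of Γ'. If H_U is a uniformly random copy of H in K_n, then P[H_U ⊆ Γ'] ≤ (2τ)^m · d^{ℓ−m} / (n−k)^ℓ. -/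
open SimpleGraph
open scoped Classical

variable {α : Type*}

private lemma walk_cross {G : SimpleGraph α} {P : Finset α} :
    ∀ {x y : α}, G.Walk x y → x ∈ P → y ∉ P → ∃ a b, G.Adj a b ∧ a ∈ P ∧ b ∉ P := by
  intro x y w
  induction w with
  | nil => exact fun h h' => absurd h h'
  | @cons u v y h p ih =>
    intro hx hy
    by_cases hv : v ∈ P
    · exact ih hv hy
    · exact ⟨u, v, h, hx, hv⟩

/-- number of connected components of `G` disjoint from `P` -/
noncomputable def mP [Fintype α] (G : SimpleGraph α) (P : Finset α) : ℕ :=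
  Nat.card {c : G.ConnectedComponent // ∀ v, G.connectedComponentMk v = c → v ∉ P}

private lemma cc_out_eq {G : SimpleGraph α} (c : G.ConnectedComponent) :
    G.connectedComponentMk (Quot.out c) = c := Quot.out_eq c

private lemma mP_le [Fintype α] (G : SimpleGraph α) (P : Finset α) :
    mP G P ≤ (Finset.univ \ P).card := by
  have : mP G P ≤ Nat.card {v : α // v ∈ Finset.univ \ P} := by
    apply Nat.card_le_card_of_injective
      (fun c => (⟨Quot.out c.1, by
        simp only [Finset.mem_sdiff, Finset.mem_univ, true_and]
        exact c.2 _ (cc_out_eq c.1)⟩ : {v : α // v ∈ Finset.univ \ P}))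
    intro c c' h
    have := congrArg Subtype.val h
    simp only at this
    ext1
    rw [← cc_out_eq c.1, ← cc_out_eq c'.1, this]
  rwa [Nat.card_eq_fintype_card, Fintype.card_coe] at this

private lemma mP_empty [Fintype α] (G : SimpleGraph α) :
    mP G ∅ = Nat.card G.ConnectedComponent :=
  Nat.card_congr (Equiv.subtypeUnivEquiv (fun c => by simp))

private lemma nat_card_subtype_erase {β : Type*} [Finite β] (p q : β → Prop) (b : β)
    (hb : p b) (h : ∀ c, q c ↔ p c ∧ c ≠ b) :
    Nat.card {c // p c} = Nat.card {c // q c} + 1 := by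
  classical
  letI := Fintype.ofFinite β
  rw [Nat.card_eq_fintype_card, Nat.card_eq_fintype_card, Fintype.card_subtype,
    Fintype.card_subtype]
  have he : Finset.univ.filter (fun x => q x) = (Finset.univ.filter (fun x => p x)).erase b := by
    ext c
    simp only [Finset.mem_filter, Finset.mem_univ, true_and, Finset.mem_erase, h]
    tauto
  have hbmem : b ∈ Finset.univ.filter (fun x => p x) := by simp [hb]
  rw [he, Finset.card_erase_of_mem hbmem]
  have := Finset.card_pos.mpr ⟨b, hbmem⟩
  omega

private lemma pinned_count {n d τ : ℕ} {Γ : SimpleGraph (Fin n)} {U : Finset (Fin n)}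
    (hU : ∀ x y, Γ.Adj x y → x ∈ U ∨ y ∈ U) (hUc : U.card ≤ τ)
    (hd : ∀ v, (Γ.neighborSet v).ncard ≤ d)
    [Fintype α] (G : SimpleGraph α) (hG : ∀ v : α, ∃ w, G.Adj v w) :
    ∀ (t : ℕ) (P : Finset α) (g : α → Fin n), (Finset.univ \ P).card = t →
      (Finset.univ.filter (fun f : α → Fin n =>
        (∀ u v, G.Adj u v → Γ.Adj (f u) (f v)) ∧ ∀ w ∈ P, f w = g w)).card ≤
      (2 * τ) ^ (mP G P) * d ^ (t - mP G P) := by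
  intro t
  induction t using Nat.strong_induction_on with
  | _ t ih =>
  intro P g ht
  by_cases hP : ∀ v : α, v ∈ P
  · -- everything pinned
    have ht0 : t = 0 := by
      rw [← ht, Finset.card_eq_zero]
      ext v; simp [hP v]
    have hm0 : mP G P = 0 := by
      rw [mP, Nat.card_eq_zero]
      left
      exact ⟨fun c => absurd (hP (Quot.out c.1)) (c.2 _ (cc_out_eq c.1))⟩
    rw [hm0, ht0]
    simp only [pow_zero, Nat.sub_zero, mul_one]
    apply Finset.card_le_one.mpr
    intro f hf f' hf'
    simp only [Finset.mem_filter] at hf hf'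
    funext v
    rw [hf.2.2 v (hP v), hf'.2.2 v (hP v)]
  push_neg at hP
  have htpos : 0 < t := by
    obtain ⟨v, hv⟩ := hP
    rw [← ht]
    exact Finset.card_pos.mpr ⟨v, by simp [hv]⟩
  by_cases hcross : ∃ w v, w ∈ P ∧ v ∉ P ∧ G.Adj w v
  · -- grow into a component already touching P
    obtain ⟨w, v, hw, hv, hadj⟩ := hcross
    have hP'c : (Finset.univ \ insert v P).card = t - 1 := by
      rw [← ht, Finset.sdiff_insert, Finset.card_erase_of_mem (by simp [hv])]
    have hmm : mP G (insert v P) = mP G P := by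
      apply Nat.card_congr
      apply Equiv.subtypeEquivRight
      intro c
      constructor
      · intro hc u hu hup
        exact hc u hu (Finset.mem_insert_of_mem hup)
      · intro hc u hu hup
        rcases Finset.mem_insert.mp hup with rfl | hup'
        · have : G.connectedComponentMk w = c := by
            rw [← hu]; exact ConnectedComponent.sound hadj.reachable
          exact hc w this hw
        · exact hc u hu hup'
    have hmle : mP G P ≤ t - 1 := by
      rw [← hmm]
      have := mP_le G (insert v P)
      omega
    have hsub : (Finset.univ.filter (fun f : α → Fin n =>
        (∀ u v, G.Adj u v → Γ.Adj (f u) (f v)) ∧ ∀ w ∈ P, f w = g w)) ⊆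
        (Γ.neighborSet (g w)).toFinset.biUnion (fun y =>
          Finset.univ.filter (fun f : α → Fin n =>
            (∀ u v, G.Adj u v → Γ.Adj (f u) (f v)) ∧
              ∀ x ∈ insert v P, f x = Function.update g v y x)) := by
      intro f hf
      simp only [Finset.mem_filter, Finset.mem_univ, true_and] at hf
      apply Finset.mem_biUnion.mpr
      refine ⟨f v, ?_, ?_⟩
      · have : Γ.Adj (f w) (f v) := hf.1 _ _ hadj
        rw [hf.2 w hw] at this
        simpa [SimpleGraph.mem_neighborSet] using this
      · simp only [Finset.mem_filter, Finset.mem_univ, true_and]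
        refine ⟨hf.1, ?_⟩
        intro x hx
        rcases Finset.mem_insert.mp hx with rfl | hx'
        · simp [Function.update_self]
        · have hxv : x ≠ v := fun h => hv (h ▸ hx')
          rw [Function.update_of_ne hxv]
          exact hf.2 x hx'
    calc (Finset.univ.filter (fun f : α → Fin n =>
        (∀ u v, G.Adj u v → Γ.Adj (f u) (f v)) ∧ ∀ w ∈ P, f w = g w)).card
        ≤ ∑ y ∈ (Γ.neighborSet (g w)).toFinset,
            (Finset.univ.filter (fun f : α → Fin n =>
              (∀ u v, G.Adj u v → Γ.Adj (f u) (f v)) ∧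
                ∀ x ∈ insert v P, f x = Function.update g v y x)).card :=
          (Finset.card_le_card hsub).trans (Finset.card_biUnion_le)
      _ ≤ ∑ y ∈ (Γ.neighborSet (g w)).toFinset,
            (2 * τ) ^ (mP G (insert v P)) * d ^ ((t - 1) - mP G (insert v P)) := by
          apply Finset.sum_le_sum
          intro y _
          exact ih (t - 1) (by omega) (insert v P) (Function.update g v y) hP'c
      _ = (Γ.neighborSet (g w)).toFinset.card *
            ((2 * τ) ^ (mP G P) * d ^ ((t - 1) - mP G P)) := by
          rw [Finset.sum_const, smul_eq_mul, hmm]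
      _ ≤ d * ((2 * τ) ^ (mP G P) * d ^ ((t - 1) - mP G P)) := by
          apply Nat.mul_le_mul_right
          rw [← Set.ncard_eq_toFinset_card']
          exact hd (g w)
      _ = (2 * τ) ^ (mP G P) * d ^ (t - mP G P) := by
          rw [mul_comm d, mul_assoc, ← pow_succ]
          congr 1
          congr 1
          omega
  · -- open a fresh component
    obtain ⟨r, hr⟩ := hP
    obtain ⟨r', hadj⟩ := hG r
    have hr' : r' ∉ P := fun h => hcross ⟨r', r, h, hr, hadj.symm⟩
    have hne : r ≠ r' := hadj.ne
    have ht2 : 2 ≤ t := by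
      rw [← ht]
      have : ({r, r'} : Finset α) ⊆ Finset.univ \ P := by
        intro x hx
        rcases Finset.mem_insert.mp hx with rfl | hx'
        · simp [hr]
        · simp [Finset.mem_singleton.mp hx', hr']
      have := Finset.card_le_card this
      simpa [Finset.card_insert_of_notMem, hne] using this
    have hP''c : (Finset.univ \ insert r' (insert r P)).card = t - 2 := by
      rw [← ht, Finset.sdiff_insert, Finset.sdiff_insert,
        Finset.card_erase_of_mem, Finset.card_erase_of_mem (by simp [hr])]
      · omega
      · simp [Finset.mem_erase, hr', hne.symm]
    have hccr : ∀ u, G.connectedComponentMk u = G.connectedComponentMk r → u ∉ P := by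
      intro u hu hup
      obtain ⟨a, b, hab, haP, hbP⟩ :=
        walk_cross ((ConnectedComponent.exact hu).some) hup hr
      exact hcross ⟨a, b, haP, hbP, hab⟩
    have hdecr : mP G P = mP G (insert r' (insert r P)) + 1 := by
      apply nat_card_subtype_erase _ _ (G.connectedComponentMk r) hccr
      intro c
      constructor
      · intro hc
        constructor
        · intro u hu hup
          exact hc u hu (Finset.mem_insert_of_mem (Finset.mem_insert_of_mem hup))
        · intro hcr
          exact hc r (by rw [hcr]) (Finset.mem_insert_of_mem (Finset.mem_insert_self r P))
      · rintro ⟨hc, hcr⟩ u hu hup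
        rcases Finset.mem_insert.mp hup with rfl | hup'
        · exact hcr (by rw [← hu]; exact (ConnectedComponent.sound hadj.reachable).symm)
        · rcases Finset.mem_insert.mp hup' with rfl | hup''
          · exact hcr (by rw [← hu])
          · exact hc u hu hup''
    have hm1 : 1 ≤ mP G P := by omega
    have hm2 : mP G (insert r' (insert r P)) ≤ t - 2 := by
      have := mP_le G (insert r' (insert r P))
      omega
    set D := Finset.univ.filter
      (fun p : Fin n × Fin n => Γ.Adj p.1 p.2 ∧ (p.1 ∈ U ∨ p.2 ∈ U)) with hD
    have hDcard : D.card ≤ 2 * τ * d := by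
      have hsubD : D ⊆ U.biUnion (fun u =>
          ({u} ×ˢ (Γ.neighborSet u).toFinset) ∪ ((Γ.neighborSet u).toFinset ×ˢ {u})) := by
        rintro ⟨x, y⟩ hxy
        simp only [hD, Finset.mem_filter, Finset.mem_univ, true_and] at hxy
        apply Finset.mem_biUnion.mpr
        rcases hxy.2 with hxU | hyU
        · exact ⟨x, hxU, Finset.mem_union_left _ (by
            simp [SimpleGraph.mem_neighborSet, hxy.1])⟩
        · exact ⟨y, hyU, Finset.mem_union_right _ (by
            simp [SimpleGraph.mem_neighborSet, hxy.1.symm])⟩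
      calc D.card ≤ ∑ u ∈ U, (({u} ×ˢ (Γ.neighborSet u).toFinset) ∪
            ((Γ.neighborSet u).toFinset ×ˢ {u})).card :=
            (Finset.card_le_card hsubD).trans Finset.card_biUnion_le
        _ ≤ ∑ u ∈ U, (d + d) := by
            apply Finset.sum_le_sum
            intro u _
            have hNd : (Γ.neighborSet u).toFinset.card ≤ d := by
              rw [← Set.ncard_eq_toFinset_card']
              exact hd u
            calc (({u} ×ˢ (Γ.neighborSet u).toFinset) ∪
                  ((Γ.neighborSet u).toFinset ×ˢ {u})).card
                ≤ ({u} ×ˢ (Γ.neighborSet u).toFinset).card +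
                  ((Γ.neighborSet u).toFinset ×ˢ {u}).card := Finset.card_union_le _ _
              _ ≤ d + d := by
                  rw [Finset.card_product, Finset.card_product]
                  simp only [Finset.card_singleton, one_mul, mul_one]
                  omega
        _ = U.card * (d + d) := by rw [Finset.sum_const, smul_eq_mul]
        _ ≤ τ * (d + d) := Nat.mul_le_mul_right _ hUc
        _ = 2 * τ * d := by ring
    have hsub : (Finset.univ.filter (fun f : α → Fin n =>
        (∀ u v, G.Adj u v → Γ.Adj (f u) (f v)) ∧ ∀ w ∈ P, f w = g w)) ⊆
        D.biUnion (fun p =>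
          Finset.univ.filter (fun f : α → Fin n =>
            (∀ u v, G.Adj u v → Γ.Adj (f u) (f v)) ∧
              ∀ x ∈ insert r' (insert r P),
                f x = Function.update (Function.update g r p.1) r' p.2 x)) := by
      intro f hf
      simp only [Finset.mem_filter, Finset.mem_univ, true_and] at hf
      apply Finset.mem_biUnion.mpr
      refine ⟨(f r, f r'), ?_, ?_⟩
      · simp only [hD, Finset.mem_filter, Finset.mem_univ, true_and]
        have hΓ : Γ.Adj (f r) (f r') := hf.1 _ _ hadj
        exact ⟨hΓ, hU _ _ hΓ⟩
      · simp only [Finset.mem_filter, Finset.mem_univ, true_and]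
        refine ⟨hf.1, ?_⟩
        intro x hx
        rcases Finset.mem_insert.mp hx with rfl | hx'
        · simp [Function.update_self]
        · rcases Finset.mem_insert.mp hx' with rfl | hx''
          · rw [Function.update_of_ne hne, Function.update_self]
          · have hx1 : x ≠ r := fun h => hr (h ▸ hx'')
            have hx2 : x ≠ r' := fun h => hr' (h ▸ hx'')
            rw [Function.update_of_ne hx2, Function.update_of_ne hx1]
            exact hf.2 x hx''
    calc (Finset.univ.filter (fun f : α → Fin n =>
        (∀ u v, G.Adj u v → Γ.Adj (f u) (f v)) ∧ ∀ w ∈ P, f w = g w)).card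
        ≤ ∑ p ∈ D, (Finset.univ.filter (fun f : α → Fin n =>
            (∀ u v, G.Adj u v → Γ.Adj (f u) (f v)) ∧
              ∀ x ∈ insert r' (insert r P),
                f x = Function.update (Function.update g r p.1) r' p.2 x)).card :=
          (Finset.card_le_card hsub).trans Finset.card_biUnion_le
      _ ≤ ∑ _p ∈ D, (2 * τ) ^ (mP G (insert r' (insert r P))) *
            d ^ ((t - 2) - mP G (insert r' (insert r P))) := by
          apply Finset.sum_le_sum
          intro p _
          exact ih (t - 2) (by omega) _ _ hP''c
      _ = D.card * ((2 * τ) ^ (mP G (insert r' (insert r P))) *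
            d ^ ((t - 2) - mP G (insert r' (insert r P)))) := by
          rw [Finset.sum_const, smul_eq_mul]
      _ ≤ (2 * τ * d) * ((2 * τ) ^ (mP G (insert r' (insert r P))) *
            d ^ ((t - 2) - mP G (insert r' (insert r P)))) :=
          Nat.mul_le_mul_right _ hDcard
      _ = (2 * τ) ^ (mP G P) * d ^ (t - mP G P) := by
          rw [hdecr]
          have he1 : (t - 2) - mP G (insert r' (insert r P)) + 1 =
              t - (mP G (insert r' (insert r P)) + 1) := by omega
          rw [pow_succ, ← he1, pow_succ]
          ring

private lemma hom_count {n d τ : ℕ} {Γ : SimpleGraph (Fin n)} {U : Finset (Fin n)}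
    (hU : ∀ x y, Γ.Adj x y → x ∈ U ∨ y ∈ U) (hUc : U.card ≤ τ)
    (hd : ∀ v, (Γ.neighborSet v).ncard ≤ d)
    [Fintype α] (G : SimpleGraph α) (hG : ∀ v : α, ∃ w, G.Adj v w) :
    (Finset.univ.filter (fun f : α → Fin n =>
        ∀ u v, G.Adj u v → Γ.Adj (f u) (f v))).card ≤
      (2 * τ) ^ (mP G ∅) * d ^ (Fintype.card α - mP G ∅) := by
  by_cases hne : Nonempty (α → Fin n)
  · obtain ⟨g⟩ := hne
    have := pinned_count hU hUc hd G hG (Fintype.card α) ∅ g (by simp)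
    have heq : (Finset.univ.filter (fun f : α → Fin n =>
        ∀ u v, G.Adj u v → Γ.Adj (f u) (f v))) =
        (Finset.univ.filter (fun f : α → Fin n =>
          (∀ u v, G.Adj u v → Γ.Adj (f u) (f v)) ∧ ∀ w ∈ (∅ : Finset α), f w = g w)) := by
      ext f; simp
    rw [heq]
    exact this
  · have : (Finset.univ : Finset (α → Fin n)) = ∅ := by
      rw [Finset.univ_eq_empty_iff]
      exact not_nonempty_iff.mp hne
    rw [this, Finset.filter_empty, Finset.card_empty]
    exact Nat.zero_le _

private lemma descFactorial_ge {n k : ℕ} (hkn : k ≤ n) :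
    ∀ {ℓ : ℕ}, ℓ ≤ k → (n - k) ^ ℓ ≤ n.descFactorial ℓ := by
  intro ℓ
  induction ℓ with
  | zero => simp
  | succ ℓ ih =>
    intro h
    rw [pow_succ, Nat.descFactorial_succ, mul_comm ((n-k)^ℓ)]
    exact Nat.mul_le_mul (by omega) (ih (by omega))

private lemma exists_perm_extend {n : ℕ} {S : Set (Fin n)} (f : ↥S ↪ Fin n) :
    ∃ σ : Equiv.Perm (Fin n), ∀ s : ↥S, σ ↑s = f s := by
  classical
  let e₀ : ↥S ≃ ↥(Set.range (⇑f)) := Equiv.ofInjective (⇑f) f.injective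
  have hc : Fintype.card ↥(Sᶜ) = Fintype.card ↥((Set.range (⇑f))ᶜ) := by
    have h1 : Fintype.card ↥(Set.range (⇑f)) = Fintype.card ↥S :=
      (Fintype.card_congr e₀).symm
    rw [Fintype.card_compl_set, Fintype.card_compl_set, h1]
  obtain ⟨ec⟩ := Fintype.card_eq.mp hc
  obtain ⟨σ, hσ⟩ := (Equiv.Set.compl e₀).symm ec
  refine ⟨σ, fun s => ?_⟩
  have := hσ s
  simpa [e₀] using this

/-- Probability that a uniformly random copy of `H` in `K_n` is contained in a fixed copy
`Γ` of a graph with `k` vertices, maximum degree `d` and vertex cover number `τ`: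
if `H` has `ℓ` vertices and `m` connected components and is isomorphic to a subgraph of
`Γ`, then `P[H_U ⊆ Γ] ≤ (2τ)^m d^{ℓ-m} / (n-k)^ℓ`.  Copies of `H` in `K_n` are the
simple graphs on `Fin n` isomorphic to `H`, vertices of a graph are its support
(non-isolated vertices), and the probability is the ratio of the number of copies
contained in `Γ` to the total number of copies. -/
theorem prob_random_copy_subset {n k ℓ m d τ : ℕ} (Γ H : SimpleGraph (Fin n))
    (hk : Γ.support.ncard = k) (hkn : k < n)
    (hd : ∀ v, (Γ.neighborSet v).ncard ≤ d)
    (hτ : τ = sInf {c : ℕ | ∃ U : Finset (Fin n), U.card = c ∧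
      ∀ e ∈ Γ.edgeSet, ∃ v ∈ U, v ∈ e})
    (hℓ : H.support.ncard = ℓ)
    (hm : m = Nat.card (H.induce H.support).ConnectedComponent)
    (hiso : ∃ H₀ : SimpleGraph (Fin n), H₀ ≤ Γ ∧ Nonempty (H₀ ≃g H)) :
    (Nat.card {H' : SimpleGraph (Fin n) // Nonempty (H' ≃g H) ∧ H' ≤ Γ} : ℝ) /
      (Nat.card {H' : SimpleGraph (Fin n) // Nonempty (H' ≃g H)} : ℝ) ≤
    ((2 * τ : ℝ) ^ m * (d : ℝ) ^ (ℓ - m)) / ((n : ℝ) - (k : ℝ)) ^ ℓ := by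
  classical
  letI : Fintype ↥H.support := Fintype.ofFinite _
  have hScard : Fintype.card ↥H.support = ℓ := by
    rw [← Nat.card_eq_fintype_card, Nat.card_coe_set_eq, hℓ]
  -- ℓ ≤ k
  obtain ⟨H₀, hH₀Γ, ⟨e⟩⟩ := hiso
  have hlk : ℓ ≤ k := by
    have hsupp₀ : H₀.support ⊆ Γ.support := by
      rintro v ⟨w, hw⟩
      exact ⟨w, hH₀Γ hw⟩
    have himg : H.support = ⇑e '' H₀.support := by
      ext v
      constructor
      · rintro ⟨w, hvw⟩
        refine ⟨e.symm v, ⟨e.symm w, ?_⟩, by simp⟩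
        have : H.Adj (e (e.symm v)) (e (e.symm w)) := by simpa using hvw
        exact e.map_adj_iff.mp this
      · rintro ⟨u, ⟨w, huw⟩, rfl⟩
        exact ⟨e w, e.map_adj_iff.mpr huw⟩
    have hc₀ : H₀.support.ncard = ℓ := by
      rw [← hℓ, himg]
      exact (Set.ncard_image_of_injective _ (RelIso.injective e)).symm
    calc ℓ = H₀.support.ncard := hc₀.symm
      _ ≤ Γ.support.ncard := Set.ncard_le_ncard hsupp₀ (Set.toFinite _)
      _ = k := hk
  -- vertex cover
  have hτmem : τ ∈ {c : ℕ | ∃ U : Finset (Fin n), U.card = c ∧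
      ∀ e ∈ Γ.edgeSet, ∃ v ∈ U, v ∈ e} := by
    rw [hτ]
    apply Nat.sInf_mem
    refine ⟨n, Finset.univ, by simp, ?_⟩
    intro e _
    induction e with
    | _ a b => exact ⟨a, Finset.mem_univ a, Sym2.mem_mk_left a b⟩
  obtain ⟨U, hUcard, hUcov⟩ := hτmem
  have hUadj : ∀ x y, Γ.Adj x y → x ∈ U ∨ y ∈ U := by
    intro x y hxy
    obtain ⟨v, hvU, hv⟩ := hUcov s(x, y) (Γ.mem_edgeSet.mpr hxy)
    rcases Sym2.mem_iff.mp hv with rfl | rfl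
    · exact Or.inl hvU
    · exact Or.inr hvU
  -- the copy map
  let q : (↥H.support ↪ Fin n) → SimpleGraph (Fin n) := fun f =>
    SimpleGraph.fromRel (fun x y => ∃ a b : ↥H.support, H.Adj ↑a ↑b ∧ f a = x ∧ f b = y)
  have hqAdj : ∀ (f : ↥H.support ↪ Fin n) (x y : Fin n),
      (q f).Adj x y ↔ ∃ a b : ↥H.support, H.Adj ↑a ↑b ∧ f a = x ∧ f b = y := by
    intro f x y
    constructor
    · rintro ⟨hne, (⟨a, b, hab, rfl, rfl⟩ | ⟨a, b, hab, rfl, rfl⟩)⟩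
      · exact ⟨a, b, hab, rfl, rfl⟩
      · exact ⟨b, a, hab.symm, rfl, rfl⟩
    · rintro ⟨a, b, hab, rfl, rfl⟩
      refine ⟨?_, Or.inl ⟨a, b, hab, rfl, rfl⟩⟩
      intro hfe
      have hab' : a = b := f.injective hfe
      exact H.loopless.irrefl _ (hab' ▸ hab)
  have hq_iso : ∀ f : ↥H.support ↪ Fin n, Nonempty (q f ≃g H) := by
    intro f
    obtain ⟨σ, hσ⟩ := exists_perm_extend f
    refine ⟨⟨σ.symm, ?_⟩⟩
    intro x y
    constructor
    · intro h
      rw [hqAdj]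
      have hxs : σ.symm x ∈ H.support := ⟨_, h⟩
      have hys : σ.symm y ∈ H.support := ⟨_, h.symm⟩
      refine ⟨⟨σ.symm x, hxs⟩, ⟨σ.symm y, hys⟩, h, ?_, ?_⟩
      · rw [← hσ ⟨σ.symm x, hxs⟩]; simp
      · rw [← hσ ⟨σ.symm y, hys⟩]; simp
    · intro h
      rw [hqAdj] at h
      obtain ⟨a, b, hab, ha, hb⟩ := h
      have ha' : σ.symm x = ↑a := by rw [← ha, ← hσ a]; simp
      have hb' : σ.symm y = ↑b := by rw [← hb, ← hσ b]; simp
      rw [ha', hb']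
      exact hab
  have hq_trans : ∀ (f : ↥H.support ↪ Fin n) (H' H'' : SimpleGraph (Fin n))
      (j : H' ≃g H''), q f = H' → q (f.trans j.toEquiv.toEmbedding) = H'' := by
    intro f H' H'' j hf
    ext x y
    rw [hqAdj]
    constructor
    · rintro ⟨a, b, hab, rfl, rfl⟩
      have h1 : H'.Adj (f a) (f b) := by
        rw [← hf, hqAdj]
        exact ⟨a, b, hab, rfl, rfl⟩
      simpa using j.map_adj_iff.mpr h1
    · intro hxy
      have h1 : H'.Adj (j.symm x) (j.symm y) := by
        apply j.map_adj_iff.mp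
        simpa using hxy
      have h2 : (q f).Adj (j.symm x) (j.symm y) := by rw [hf]; exact h1
      obtain ⟨a, b, hab, ha, hb⟩ := (hqAdj f _ _).mp h2
      refine ⟨a, b, hab, ?_, ?_⟩
      · simp only [Function.Embedding.trans_apply, Equiv.coe_toEmbedding, ha]
        simp
      · simp only [Function.Embedding.trans_apply, Equiv.coe_toEmbedding, hb]
        simp
  -- fibers
  let F : SimpleGraph (Fin n) → Finset (↥H.support ↪ Fin n) := fun H' =>
    Finset.univ.filter (fun f => q f = H')
  have hFcard : ∀ (H' H'' : SimpleGraph (Fin n)), (H' ≃g H'') →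
      (F H').card = (F H'').card := by
    intro H' H'' j
    refine Finset.card_bij' (fun f _ => f.trans j.toEquiv.toEmbedding)
      (fun f _ => f.trans j.symm.toEquiv.toEmbedding) ?_ ?_ ?_ ?_
    · intro f hf
      simp only [F, Finset.mem_filter, Finset.mem_univ, true_and] at hf ⊢
      exact hq_trans f H' H'' j hf
    · intro f hf
      simp only [F, Finset.mem_filter, Finset.mem_univ, true_and] at hf ⊢
      exact hq_trans f H'' H' j.symm hf
    · intro f _
      ext a
      simp
    · intro f _
      ext a
      simp
  set a := (F H).card with ha
  set 𝔅 : Finset (SimpleGraph (Fin n)) :=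
    Finset.univ.filter (fun H' => Nonempty (H' ≃g H)) with h𝔅
  set 𝔄 : Finset (SimpleGraph (Fin n)) :=
    Finset.univ.filter (fun H' => Nonempty (H' ≃g H) ∧ H' ≤ Γ) with h𝔄
  have hfibB : ∀ H' ∈ 𝔅, (Finset.univ.filter (fun f => q f = H')).card = a := by
    intro H' hH'
    have hiso' : Nonempty (H' ≃g H) := by
      simpa [h𝔅] using hH'
    exact hFcard H' H hiso'.some
  have hEmbCard : (Finset.univ : Finset (↥H.support ↪ Fin n)).card = 𝔅.card * a := by
    rw [Finset.card_eq_sum_card_fiberwise (f := q) (t := 𝔅) (fun f _ => by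
      simp only [h𝔅, Finset.mem_coe, Finset.mem_filter, Finset.mem_univ, true_and]
      exact hq_iso f)]
    rw [Finset.sum_congr rfl hfibB, Finset.sum_const, smul_eq_mul]
  set EmbΓ : Finset (↥H.support ↪ Fin n) :=
    Finset.univ.filter (fun f => ∀ u v : ↥H.support, H.Adj ↑u ↑v → Γ.Adj (f u) (f v))
    with hEmbΓ
  have hqle : ∀ f : ↥H.support ↪ Fin n, (q f ≤ Γ ↔ f ∈ EmbΓ) := by
    intro f
    simp only [hEmbΓ, Finset.mem_filter, Finset.mem_univ, true_and]
    constructor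
    · intro hle u v huv
      exact hle ((hqAdj f _ _).mpr ⟨u, v, huv, rfl, rfl⟩)
    · intro hf x y hxy
      obtain ⟨u, v, huv, rfl, rfl⟩ := (hqAdj f _ _).mp hxy
      exact hf u v huv
  have hfibA : ∀ H' ∈ 𝔄, (EmbΓ.filter (fun f => q f = H')).card = a := by
    intro H' hH'
    obtain ⟨hiso', hle'⟩ : Nonempty (H' ≃g H) ∧ H' ≤ Γ := by
      simpa [h𝔄] using hH'
    have hfib : EmbΓ.filter (fun f => q f = H') = F H' := by
      ext f
      simp only [F, hEmbΓ, Finset.mem_filter, Finset.mem_univ, true_and,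
        and_iff_right_iff_imp]
      intro hq'
      have := (hqle f).mp (hq' ▸ hle')
      simpa [hEmbΓ] using this
    rw [hfib]
    exact hFcard H' H hiso'.some
  have hEmbΓCard : EmbΓ.card = 𝔄.card * a := by
    rw [Finset.card_eq_sum_card_fiberwise (f := q) (t := 𝔄) (fun f hf => by
      simp only [h𝔄, Finset.mem_coe, Finset.mem_filter, Finset.mem_univ, true_and]
      exact ⟨hq_iso f, (hqle f).mpr hf⟩)]
    rw [Finset.sum_congr rfl hfibA, Finset.sum_const, smul_eq_mul]
  -- bound on EmbΓ
  set G₀ : SimpleGraph ↥H.support := H.induce H.support with hG₀def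
  have hG₀adj : ∀ u v : ↥H.support, G₀.Adj u v ↔ H.Adj ↑u ↑v := by
    intro u v
    rw [hG₀def]
    exact SimpleGraph.comap_adj
  have hG₀ : ∀ v : ↥H.support, ∃ w, G₀.Adj v w := by
    intro v
    obtain ⟨w, hvw⟩ := (SimpleGraph.mem_support H).mp v.2
    exact ⟨⟨w, (SimpleGraph.mem_support H).mpr ⟨↑v, hvw.symm⟩⟩, (hG₀adj _ _).mpr hvw⟩
  have hm₀ : mP G₀ ∅ = m := by
    rw [hm]
    exact mP_empty G₀
  have hEmbΓBound : EmbΓ.card ≤ (2 * τ) ^ m * d ^ (ℓ - m) := by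
    have hhom := hom_count hUadj (le_of_eq hUcard) hd G₀ hG₀
    rw [hm₀, hScard] at hhom
    refine le_trans ?_ hhom
    apply Finset.card_le_card_of_injOn
      (fun f : ↥H.support ↪ Fin n => (f : ↥H.support → Fin n))
    · intro f hf
      simp only [hEmbΓ, Finset.mem_coe, Finset.mem_filter, Finset.mem_univ, true_and] at hf ⊢
      intro u v huv
      exact hf u v ((hG₀adj u v).mp huv)
    · exact Function.Embedding.coe_injective.injOn
  -- total count
  have hEmb : (Finset.univ : Finset (↥H.support ↪ Fin n)).card = n.descFactorial ℓ := by
    rw [Finset.card_univ, Fintype.card_embedding_eq, hScard, Fintype.card_fin]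
  -- nat inequality
  have hAcard : Nat.card {H' : SimpleGraph (Fin n) // Nonempty (H' ≃g H) ∧ H' ≤ Γ} =
      𝔄.card := by
    rw [h𝔄, Nat.card_eq_fintype_card, Fintype.card_subtype]
  have hBcard : Nat.card {H' : SimpleGraph (Fin n) // Nonempty (H' ≃g H)} = 𝔅.card := by
    rw [h𝔅, Nat.card_eq_fintype_card, Fintype.card_subtype]
  have hBpos : 0 < 𝔅.card := by
    apply Finset.card_pos.mpr
    refine ⟨H, ?_⟩
    simp only [h𝔅, Finset.mem_filter, Finset.mem_univ, true_and]
    exact ⟨RelIso.refl H.Adj⟩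
  have key : 𝔄.card * (n - k) ^ ℓ ≤ (2 * τ) ^ m * d ^ (ℓ - m) * 𝔅.card := by
    have h1 : (n - k) ^ ℓ ≤ 𝔅.card * a := by
      rw [← hEmbCard, hEmb]
      exact descFactorial_ge hkn.le hlk
    have h2 : 𝔄.card * a ≤ (2 * τ) ^ m * d ^ (ℓ - m) := hEmbΓCard ▸ hEmbΓBound
    calc 𝔄.card * (n - k) ^ ℓ ≤ 𝔄.card * (𝔅.card * a) := Nat.mul_le_mul_left _ h1
      _ = (𝔄.card * a) * 𝔅.card := by ring
      _ ≤ (2 * τ) ^ m * d ^ (ℓ - m) * 𝔅.card := Nat.mul_le_mul_right _ h2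
  -- conclude over ℝ
  rw [hAcard, hBcard]
  have hnk : (n : ℝ) - (k : ℝ) = ((n - k : ℕ) : ℝ) := by
    rw [Nat.cast_sub hkn.le]
  have hBpos' : (0:ℝ) < (𝔅.card : ℝ) := by exact_mod_cast hBpos
  have hDpos : (0:ℝ) < (((n - k : ℕ)):ℝ) ^ ℓ := by
    have h0 : 0 < n - k := by omega
    have h1 : (0:ℝ) < ((n - k : ℕ) : ℝ) := by exact_mod_cast h0
    positivity
  rw [hnk, div_le_div_iff₀ hBpos' hDpos]
  push_cast
  have key' := key
  have : ((𝔄.card : ℝ)) * ((n - k : ℕ) : ℝ) ^ ℓ ≤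
      ((2 * τ : ℕ) : ℝ) ^ m * ((d : ℕ) : ℝ) ^ (ℓ - m) * (𝔅.card : ℝ) := by
    exact_mod_cast key
  push_cast at this
  linarith
end

section
/- For every ε > 0, every nonempty finite simple graph Γ can be decomposed into M = ⌈1/ε⌉ edge-disjoint subgraphs Γ₁,…,Γ_M (some possibly empty) such that for every ℓ ∈ {1,…,M}, τ(Γ_ℓ) · d_max(Γ_ℓ) ≤ 2 |e(Γ)| · d_max(Γ)^{1/M}, where τ denotes vertex cover number and d_max denotes maximum degree. -/
open SimpleGraph Finset

private def clsP (D M w i : ℕ) : Prop := D ^ (M - 1 - i) ≤ w ^ M ∨ M ≤ i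

private instance (D M w i : ℕ) : Decidable (clsP D M w i) := by
  unfold clsP; infer_instance

private def cls (D M w : ℕ) : ℕ := Nat.find (⟨M, Or.inr le_rfl⟩ : ∃ i, clsP D M w i)

private lemma cls_le {D M w : ℕ} (hw : 1 ≤ w) : cls D M w ≤ M - 1 :=
  Nat.find_le (Or.inl (by simpa using Nat.one_le_pow M w hw))

private lemma cls_lt {D M w : ℕ} (hM : 1 ≤ M) (hw : 1 ≤ w) : cls D M w < M :=
  lt_of_le_of_lt (cls_le hw) (by omega)

private lemma cls_lower {D M w : ℕ} (hM : 1 ≤ M) (hw : 1 ≤ w) :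
    D ^ (M - 1 - cls D M w) ≤ w ^ M := by
  rcases Nat.find_spec (⟨M, Or.inr le_rfl⟩ : ∃ i, clsP D M w i) with h | h
  · exact h
  · exact absurd (cls_lt hM hw) (not_lt.mpr h)

private lemma cls_upper {D M w : ℕ} (hwD : w ≤ D) : w ^ M ≤ D ^ (M - cls D M w) := by
  rcases Nat.eq_zero_or_pos (cls D M w) with h | h
  · rw [h, Nat.sub_zero]
    exact Nat.pow_le_pow_left hwD M
  · have hmin := Nat.find_min (⟨M, Or.inr le_rfl⟩ : ∃ i, clsP D M w i)
      (show cls D M w - 1 < cls D M w by omega)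
    unfold clsP at hmin
    push_neg at hmin
    have h1 : w ^ M < D ^ (M - 1 - (cls D M w - 1)) := hmin.1
    have h2 : cls D M w ≤ M := by have := hmin.2; omega
    have : M - 1 - (cls D M w - 1) = M - cls D M w := by omega
    rw [this] at h1
    exact h1.le

private lemma root_le {a b k M : ℕ} (hM : 1 ≤ M) (h : a ^ M ≤ b ^ k) :
    (a : ℝ) ≤ (b : ℝ) ^ ((k : ℝ) / (M : ℝ)) := by
  have hM0 : (M : ℝ) ≠ 0 := by positivity
  have hc : ((a : ℝ)) ^ (M : ℕ) ≤ ((b : ℝ)) ^ (k : ℕ) := by exact_mod_cast h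
  have hmono := Real.rpow_le_rpow (by positivity) hc
    (le_of_lt (show (0:ℝ) < 1 / (M:ℝ) by positivity))
  rwa [← Real.rpow_natCast (a:ℝ) M, ← Real.rpow_natCast (b:ℝ) k,
    ← Real.rpow_mul (by positivity), ← Real.rpow_mul (by positivity),
    mul_one_div, mul_one_div, div_self hM0, Real.rpow_one] at hmono

private lemma le_root {a b k M : ℕ} (hM : 1 ≤ M) (h : b ^ k ≤ a ^ M) :
    (b : ℝ) ^ ((k : ℝ) / (M : ℝ)) ≤ (a : ℝ) := by
  have hM0 : (M : ℝ) ≠ 0 := by positivity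
  have hc : ((b : ℝ)) ^ (k : ℕ) ≤ ((a : ℝ)) ^ (M : ℕ) := by exact_mod_cast h
  have hmono := Real.rpow_le_rpow (by positivity) hc
    (le_of_lt (show (0:ℝ) < 1 / (M:ℝ) by positivity))
  rwa [← Real.rpow_natCast (a:ℝ) M, ← Real.rpow_natCast (b:ℝ) k,
    ← Real.rpow_mul (by positivity), ← Real.rpow_mul (by positivity),
    mul_one_div, mul_one_div, div_self hM0, Real.rpow_one] at hmono

open SimpleGraph Finset

/-- For every `ε > 0`, every nonempty graph `Γ` decomposes into `M = ⌈1/ε⌉` edge-disjoint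
subgraphs `Γ₁,…,Γ_M` (some possibly empty) with
`τ(Γ_ℓ)·d_max(Γ_ℓ) ≤ 2|e(Γ)|·d_max(Γ)^{1/M}` for every `ℓ`, where `τ` is the vertex
cover number and `d_max` the maximum degree. -/
theorem vcd_balanced_decomposition {n : ℕ} (Γ : SimpleGraph (Fin n))
    (hΓ : Γ.edgeSet.Nonempty) (ε : ℝ) (hε : 0 < ε) :
    ∃ Γs : Fin ⌈1 / ε⌉₊ → SimpleGraph (Fin n),
      (∀ i, Γs i ≤ Γ) ∧
      (Γ.edgeSet = ⋃ i, (Γs i).edgeSet) ∧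
      (∀ i j, i ≠ j → Disjoint (Γs i).edgeSet (Γs j).edgeSet) ∧
      ∀ i,
        ((sInf {c : ℕ | ∃ U : Finset (Fin n), U.card = c ∧
            ∀ e ∈ (Γs i).edgeSet, ∃ v ∈ U, v ∈ e} : ℕ) : ℝ) *
          ((Finset.univ.sup fun v => ((Γs i).neighborSet v).ncard : ℕ) : ℝ) ≤
        2 * (Γ.edgeSet.ncard : ℝ) *
          ((Finset.univ.sup fun v => (Γ.neighborSet v).ncard : ℕ) : ℝ) ^
            ((1 : ℝ) / (⌈1 / ε⌉₊ : ℝ)) := by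
  classical
  set M := ⌈1 / ε⌉₊ with hMdef
  have hM : 1 ≤ M := Nat.one_le_iff_ne_zero.mpr (by
    rw [hMdef, Ne, Nat.ceil_eq_zero, not_le]
    positivity)
  -- ncard of neighborSet equals degree
  have hns : ∀ (G : SimpleGraph (Fin n)) [DecidableRel G.Adj] (v : Fin n),
      (G.neighborSet v).ncard = G.degree v := by
    intro G _ v
    rw [SimpleGraph.degree, SimpleGraph.neighborFinset_def, Set.ncard_eq_toFinset_card']
  set D := Finset.univ.sup (fun v => Γ.degree v) with hDdef
  have hdegD : ∀ v, Γ.degree v ≤ D := by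
    intro v
    rw [hDdef]
    exact Finset.le_sup (f := fun v => Γ.degree v) (Finset.mem_univ v)
  have hadj_deg : ∀ {u v : Fin n}, Γ.Adj u v → 1 ≤ Γ.degree u := by
    intro u v h
    exact (Γ.degree_pos_iff_exists_adj u).mpr ⟨v, h⟩
  -- edge weight
  set w : Fin n → Fin n → ℕ := fun u v => max (Γ.degree u) (Γ.degree v) with hwdef
  have hwsymm : ∀ u v, w u v = w v u := fun u v => max_comm _ _
  have hw1 : ∀ {u v : Fin n}, Γ.Adj u v → 1 ≤ w u v := by
    intro u v h
    exact le_trans (hadj_deg h) (le_max_left _ _)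
  have hwD : ∀ u v, w u v ≤ D := fun u v => max_le (hdegD u) (hdegD v)
  set Γs : Fin M → SimpleGraph (Fin n) := fun i =>
    { Adj := fun u v => Γ.Adj u v ∧ cls D M (w u v) = i.val
      symm := by
        constructor
        intro u v h
        exact ⟨h.1.symm, by rw [hwsymm v u]; exact h.2⟩
      loopless := ⟨fun v h => Γ.loopless.irrefl v h.1⟩ } with hΓsdef
  have hle : ∀ i, Γs i ≤ Γ := fun i u v h => h.1
  refine ⟨Γs, hle, ?_, ?_, ?_⟩
  · -- union of edge sets
    ext e
    induction e using Sym2.ind with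
    | _ u v =>
      simp only [mem_edgeSet, Set.mem_iUnion]
      constructor
      · intro h
        exact ⟨⟨cls D M (w u v), cls_lt hM (hw1 h)⟩, h, rfl⟩
      · rintro ⟨i, h, -⟩
        exact h
  · -- disjointness
    intro i j hij
    rw [Set.disjoint_left]
    intro e
    induction e using Sym2.ind with
    | _ u v =>
      simp only [mem_edgeSet]
      rintro ⟨-, h1⟩ ⟨-, h2⟩
      exact hij (Fin.ext (h1 ▸ h2))
  · -- the main bound
    intro i
    have hi : i.val < M := i.isLt
    -- the cover set
    set S : Finset (Fin n) :=
      Finset.univ.filter (fun v => D ^ (M - 1 - i.val) ≤ (Γ.degree v) ^ M) with hSdef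
    have hcover : ∀ e ∈ (Γs i).edgeSet, ∃ v ∈ S, v ∈ e := by
      intro e
      induction e using Sym2.ind with
      | _ u v =>
        rintro ⟨hadj, hcls⟩
        have hlow : D ^ (M - 1 - i.val) ≤ (w u v) ^ M := by
          rw [← hcls]; exact cls_lower hM (hw1 hadj)
        rcases max_cases (Γ.degree u) (Γ.degree v) with ⟨heq, -⟩ | ⟨heq, -⟩
        · refine ⟨u, ?_, Sym2.mem_mk_left u v⟩
          rw [hSdef, Finset.mem_filter]
          exact ⟨Finset.mem_univ u, by rwa [← heq]⟩
        · refine ⟨v, ?_, Sym2.mem_mk_right u v⟩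
          rw [hSdef, Finset.mem_filter]
          exact ⟨Finset.mem_univ v, by rwa [← heq]⟩
    have hτ : sInf {c : ℕ | ∃ U : Finset (Fin n), U.card = c ∧
        ∀ e ∈ (Γs i).edgeSet, ∃ v ∈ U, v ∈ e} ≤ S.card :=
      Nat.sInf_le ⟨S, rfl, hcover⟩
    -- rewrite ncards as degrees
    have hsup1 : (Finset.univ.sup fun v => ((Γs i).neighborSet v).ncard)
        = Finset.univ.sup fun v => (Γs i).degree v := by
      apply Finset.sup_congr rfl
      intro v _
      exact hns (Γs i) v
    have hsup2 : (Finset.univ.sup fun v => (Γ.neighborSet v).ncard) = D := by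
      rw [hDdef]
      apply Finset.sup_congr rfl
      intro v _
      exact hns Γ v
    have hE : Γ.edgeSet.ncard = Γ.edgeFinset.card := by
      rw [SimpleGraph.edgeFinset, Set.ncard_eq_toFinset_card']
    -- bound on |S| * D^((M-1-i)/M)
    have hSbound : (S.card : ℝ) * (D : ℝ) ^ (((M - 1 - i.val : ℕ) : ℝ) / (M : ℝ))
        ≤ 2 * (Γ.edgeSet.ncard : ℝ) := by
      have h1 : ∀ v ∈ S, (D : ℝ) ^ (((M - 1 - i.val : ℕ) : ℝ) / (M : ℝ)) ≤ (Γ.degree v : ℝ) := by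
        intro v hv
        rw [hSdef, Finset.mem_filter] at hv
        exact le_root hM hv.2
      have h2 := Finset.card_nsmul_le_sum S (fun v => (Γ.degree v : ℝ)) _ h1
      rw [nsmul_eq_mul] at h2
      have h3 : ∑ v ∈ S, (Γ.degree v : ℝ) ≤ ∑ v, (Γ.degree v : ℝ) :=
        Finset.sum_le_sum_of_subset_of_nonneg (Finset.subset_univ S)
          (fun v _ _ => by positivity)
      have h4 : ∑ v, (Γ.degree v : ℝ) = 2 * (Γ.edgeSet.ncard : ℝ) := by
        rw [hE]
        exact_mod_cast congrArg (fun k : ℕ => (k : ℝ))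
          (SimpleGraph.sum_degrees_eq_twice_card_edges Γ)
      calc (S.card : ℝ) * (D : ℝ) ^ (((M - 1 - i.val : ℕ) : ℝ) / (M : ℝ))
          ≤ ∑ v ∈ S, (Γ.degree v : ℝ) := h2
        _ ≤ ∑ v, (Γ.degree v : ℝ) := h3
        _ = 2 * (Γ.edgeSet.ncard : ℝ) := h4
    -- bound on max degree of Γs i
    have hdmax : ((Finset.univ.sup fun v => (Γs i).degree v : ℕ) : ℝ)
        ≤ (D : ℝ) ^ (((M - i.val : ℕ) : ℝ) / (M : ℝ)) := by
      obtain ⟨e0, he0⟩ := hΓ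
      obtain ⟨u0, hu0⟩ : ∃ u : Fin n, True := by
        induction e0 using Sym2.ind with
        | _ a b => exact ⟨a, trivial⟩
      obtain ⟨v₀, -, hv₀⟩ := Finset.exists_mem_eq_sup Finset.univ
        ⟨u0, Finset.mem_univ u0⟩ (fun v => (Γs i).degree v)
      rw [hv₀]
      rcases Nat.eq_zero_or_pos ((Γs i).degree v₀) with h | h
      · rw [h]
        simp only [Nat.cast_zero]
        exact Real.rpow_nonneg (Nat.cast_nonneg D) _
      · obtain ⟨u, hu⟩ := ((Γs i).degree_pos_iff_exists_adj v₀).mp h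
        obtain ⟨hadj, hcls⟩ := hu
        have hup : (w v₀ u) ^ M ≤ D ^ (M - i.val) := by
          rw [← hcls]; exact cls_upper (hwD v₀ u)
        have hd1 : (Γs i).degree v₀ ≤ Γ.degree v₀ := by
          apply Finset.card_le_card
          intro x hx
          rw [SimpleGraph.mem_neighborFinset] at hx ⊢
          exact (hle i) hx
        have hd2 : Γ.degree v₀ ≤ w v₀ u := le_max_left _ _
        have hfin : ((Γs i).degree v₀) ^ M ≤ D ^ (M - i.val) :=
          le_trans (Nat.pow_le_pow_left (le_trans hd1 hd2) M) hup
        exact root_le hM hfin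
    -- exponent arithmetic
    have hexp : (((M - i.val : ℕ) : ℝ) / (M : ℝ))
        = (((M - 1 - i.val : ℕ) : ℝ) / (M : ℝ)) + 1 / (M : ℝ) := by
      have : (M - i.val : ℕ) = (M - 1 - i.val : ℕ) + 1 := by omega
      rw [this]
      push_cast
      ring
    have hD0 : (0 : ℝ) < (D : ℝ) := by
      obtain ⟨e0, he0⟩ := hΓ
      induction e0 using Sym2.ind with
      | _ a b =>
        rw [mem_edgeSet] at he0
        have := le_trans (hadj_deg he0) (hdegD a)
        exact_mod_cast lt_of_lt_of_le Nat.one_pos this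
    rw [hsup1, hsup2]
    have hrw : (D : ℝ) ^ (((M - i.val : ℕ) : ℝ) / (M : ℝ))
        = (D : ℝ) ^ (((M - 1 - i.val : ℕ) : ℝ) / (M : ℝ)) * (D : ℝ) ^ ((1 : ℝ) / (M : ℝ)) := by
      rw [hexp, Real.rpow_add hD0]
    calc ((sInf {c : ℕ | ∃ U : Finset (Fin n), U.card = c ∧
            ∀ e ∈ (Γs i).edgeSet, ∃ v ∈ U, v ∈ e} : ℕ) : ℝ) *
          ((Finset.univ.sup fun v => (Γs i).degree v : ℕ) : ℝ)
        ≤ (S.card : ℝ) * ((D : ℝ) ^ (((M - 1 - i.val : ℕ) : ℝ) / (M : ℝ)) * (D : ℝ) ^ ((1 : ℝ) / (M : ℝ))) := by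
          rw [← hrw]
          exact mul_le_mul (by exact_mod_cast hτ) hdmax (Nat.cast_nonneg _) (Nat.cast_nonneg _)
      _ = ((S.card : ℝ) * (D : ℝ) ^ (((M - 1 - i.val : ℕ) : ℝ) / (M : ℝ))) * (D : ℝ) ^ ((1 : ℝ) / (M : ℝ)) := by
          ring
      _ ≤ (2 * (Γ.edgeSet.ncard : ℝ)) * (D : ℝ) ^ ((1 : ℝ) / (M : ℝ)) := by
          exact mul_le_mul_of_nonneg_right hSbound (Real.rpow_nonneg (Nat.cast_nonneg D) _)
end

section
/- Let Γ be a finite simple graph, and let Γ = Γ₁ ∪ ⋯ ∪ Γ_M be a decomposition into edge-disjoint subgraphs. In the construction of the vcd-balanced decomposition (as in the previous statement), for each i, d_max(Γᵢ) ≤ d_max(Γ)^{(M−i+1)/M}: every vertex of Γᵢ either lies in the cover set Sᵢ (so its degree in Γ, hence in Γᵢ, is below the threshold d_max(Γ)^{(M−i+1)/M}), or all its incident edges were assigned to an earlier part, contradicting membership in Γᵢ. -/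
open SimpleGraph

/-- In the vcd-balanced decomposition construction (parts indexed by `i : Fin M`,
corresponding to the paper's index `i+1`): `S i` is the set of vertices of `Γ`-degree at
least `d^{(M-(i+1))/M}` not already covered by an earlier part, and the edge set of
`Γs i` consists of the `Γ`-edges meeting `S i` that do not belong to an earlier part.
Then the maximum degree of each part satisfies `d_max(Γs i) ≤ d^{(M-i)/M}`. -/
theorem decomposition_maxDegree_bound {n M d : ℕ} (hM : 0 < M)
    (Γ : SimpleGraph (Fin n)) (hd : ∀ v, (Γ.neighborSet v).ncard ≤ d)
    (S : Fin M → Finset (Fin n)) (Γs : Fin M → SimpleGraph (Fin n))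
    (hS : ∀ (i : Fin M) (v : Fin n), v ∈ S i ↔
      ((d : ℝ) ^ (((M : ℝ) - ((i : ℕ) + 1)) / (M : ℝ)) ≤ ((Γ.neighborSet v).ncard : ℝ) ∧
        ∀ j, j < i → v ∉ S j))
    (hE : ∀ i : Fin M, (Γs i).edgeSet =
      {e | e ∈ Γ.edgeSet ∧ (∃ v ∈ S i, v ∈ e) ∧ ∀ j, j < i → e ∉ (Γs j).edgeSet}) :
    ∀ (i : Fin M) (v : Fin n),
      (((Γs i).neighborSet v).ncard : ℝ) ≤ (d : ℝ) ^ (((M : ℝ) - (i : ℕ)) / (M : ℝ)) := by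
  intro i v
  have hsub : (Γs i).neighborSet v ⊆ Γ.neighborSet v := by
    intro w hw
    have h1 : s(v, w) ∈ (Γs i).edgeSet := hw
    rw [hE i] at h1
    exact h1.1
  have hdeg : ((Γs i).neighborSet v).ncard ≤ (Γ.neighborSet v).ncard :=
    Set.ncard_le_ncard hsub (Set.toFinite _)
  by_cases hd0 : d = 0
  · subst hd0
    have h0 : ((Γs i).neighborSet v).ncard = 0 :=
      Nat.le_zero.mp (hdeg.trans (hd v))
    rw [h0]
    push_cast
    exact Real.rpow_nonneg le_rfl _
  have h1d : (1 : ℝ) ≤ (d : ℝ) := by exact_mod_cast Nat.one_le_iff_ne_zero.mpr hd0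
  by_cases hvS : v ∈ S i
  · -- v ∈ S i : use v ∉ S (i-1) (or i = 0)
    by_cases hi0 : (i : ℕ) = 0
    · have hone : ((M : ℝ) - (i : ℕ)) / (M : ℝ) = 1 := by
        rw [hi0]
        push_cast
        field_simp
        simp
      rw [hone, Real.rpow_one]
      exact_mod_cast hdeg.trans (hd v)
    · have hj : ((i : ℕ) - 1) < M := by omega
      set j : Fin M := ⟨(i : ℕ) - 1, hj⟩ with hjdef
      have hji : j < i := by
        simp only [Fin.lt_def, hjdef]
        omega
      have hnj : v ∉ S j := ((hS i v).mp hvS).2 j hji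
      have hall : ∀ k, k < j → v ∉ S k := fun k hk => ((hS i v).mp hvS).2 k (hk.trans hji)
      have hlt : ((Γ.neighborSet v).ncard : ℝ) <
          (d : ℝ) ^ (((M : ℝ) - ((j : ℕ) + 1)) / (M : ℝ)) := by
        by_contra hcon
        push_neg at hcon
        exact hnj ((hS j v).mpr ⟨hcon, hall⟩)
      have hje : ((j : ℕ) : ℝ) + 1 = ((i : ℕ) : ℝ) := by
        simp only [hjdef]
        push_cast [Nat.cast_sub (Nat.one_le_iff_ne_zero.mpr hi0)]
        ring
      rw [hje] at hlt
      calc (((Γs i).neighborSet v).ncard : ℝ) ≤ ((Γ.neighborSet v).ncard : ℝ) := by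
            exact_mod_cast hdeg
        _ ≤ _ := hlt.le
  · by_cases hvj : ∃ j, j < i ∧ v ∈ S j
    · -- all edges at v are in an earlier part; neighborSet is empty
      obtain ⟨j, hji, hvSj⟩ := hvj
      have hempty : (Γs i).neighborSet v = ∅ := by
        ext w
        simp only [mem_neighborSet, Set.mem_empty_iff_false, iff_false]
        intro hadj
        have he : s(v, w) ∈ (Γs i).edgeSet := hadj
        rw [hE i] at he
        obtain ⟨heΓ, -, hnot⟩ := he
        by_cases hk : ∀ k, k < j → s(v, w) ∉ (Γs k).edgeSet
        · have : s(v, w) ∈ (Γs j).edgeSet := by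
            rw [hE j]
            exact ⟨heΓ, ⟨v, hvSj, Sym2.mem_mk_left _ _⟩, hk⟩
          exact hnot j hji this
        · push_neg at hk
          obtain ⟨k, hkj, hke⟩ := hk
          exact hnot k (hkj.trans hji) hke
      rw [hempty]
      simp only [Set.ncard_empty, Nat.cast_zero]
      exact Real.rpow_nonneg (by positivity) _
    · push_neg at hvj
      have hlt : ((Γ.neighborSet v).ncard : ℝ) <
          (d : ℝ) ^ (((M : ℝ) - ((i : ℕ) + 1)) / (M : ℝ)) := by
        by_contra hcon
        push_neg at hcon
        exact hvS ((hS i v).mpr ⟨hcon, hvj⟩)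
      have hexp : ((M : ℝ) - ((i : ℕ) + 1)) / (M : ℝ) ≤ ((M : ℝ) - (i : ℕ)) / (M : ℝ) := by
        have hM' : (0 : ℝ) < (M : ℝ) := by exact_mod_cast hM
        gcongr
        linarith
      calc (((Γs i).neighborSet v).ncard : ℝ) ≤ ((Γ.neighborSet v).ncard : ℝ) := by
            exact_mod_cast hdeg
        _ ≤ (d : ℝ) ^ (((M : ℝ) - ((i : ℕ) + 1)) / (M : ℝ)) := hlt.le
        _ ≤ _ := Real.rpow_le_rpow_of_exponent_le h1d hexp
end
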